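/- arXiv:2408.16687 — 3 statements merged into one kernel-verified Lean document; each statement's English description precedes it below -/
import Mathlib

section
/- Projections kill Efron-Stein components outside their support: if X is a d-partite (q,γ)-product and T, S ⊆ [d] with S ⊄ T, then ‖E_T f^{=S}‖_q ≤ |T| 2^{O(|S|)} γ ‖f‖_q. -/
open Finset BigOperators

/-- Conditional expectation operator `E_T` on a `d`-partite space:
`E_T f (x) = E[f(y) | y_T = x_T]` under the (finitely supported) measure `μ`. -/
noncomputable def projE {d : ℕ} {Ω : Type} [Fintype Ω] [DecidableEq Ω]
    (μ : (Fin d → Ω) → ℝ) (T : Finset (Fin d))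
    (f : (Fin d → Ω) → ℝ) (x : Fin d → Ω) : ℝ :=
  (∑ y : Fin d → Ω, if ∀ i ∈ T, y i = x i then μ y * f y else 0) /
  (∑ y : Fin d → Ω, if ∀ i ∈ T, y i = x i then μ y else 0)

/-- Efron–Stein component `f^{=S} = ∑_{T ⊆ S} (-1)^{|S|-|T|} E_T f`. -/
noncomputable def esComp {d : ℕ} {Ω : Type} [Fintype Ω] [DecidableEq Ω]
    (μ : (Fin d → Ω) → ℝ) (S : Finset (Fin d))
    (f : (Fin d → Ω) → ℝ) : (Fin d → Ω) → ℝ :=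
  fun x => ∑ T ∈ S.powerset, (-1 : ℝ) ^ (S.card - T.card) * projE μ T f x

/-- `L^q` norm with respect to the probability mass function `μ`. -/
noncomputable def pnorm {α : Type} [Fintype α] (μ : α → ℝ) (q : ℝ) (f : α → ℝ) : ℝ :=
  (∑ x, μ x * |f x| ^ q) ^ (1 / q)

/-- Conditional (link) measure obtained from `μ` by conditioning the coordinates
in `R` to agree with `z`. -/
noncomputable def condMeasure {d : ℕ} {Ω : Type} [Fintype Ω] [DecidableEq Ω]
    (μ : (Fin d → Ω) → ℝ) (R : Finset (Fin d)) (z : Fin d → Ω) :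
    (Fin d → Ω) → ℝ :=
  fun y => (if ∀ i ∈ R, y i = z i then μ y else 0) /
    (∑ y' : Fin d → Ω, if ∀ i ∈ R, y' i = z i then μ y' else 0)

/-- Expectation with respect to the mass function `μ`. -/
noncomputable def expect {α : Type} [Fintype α] (μ : α → ℝ) (f : α → ℝ) : ℝ :=
  ∑ x, μ x * f x

/-- `X` is a `(q,γ)`-product: in every link of codimension at least `2`
(conditioning the coordinates in `R` on `z`), for every pair of distinct colors
`i, j ∉ R`, the bipartite walk from color `i` to color `j` is a `q`-norm
expander: `‖A^τ_{i,j} g − Π^τ_{i,j} g‖_q ≤ γ ‖g‖_q` for every function `g` of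
the `i`-th coordinate. -/
def IsQGammaProduct {d : ℕ} {Ω : Type} [Fintype Ω] [DecidableEq Ω]
    (μ : (Fin d → Ω) → ℝ) (q γ : ℝ) : Prop :=
  ∀ (R : Finset (Fin d)) (z : Fin d → Ω), R.card + 2 ≤ d →
    ∀ i j : Fin d, i ∉ R → j ∉ R → i ≠ j →
      ∀ g : (Fin d → Ω) → ℝ, (∀ x y, x i = y i → g x = g y) →
        pnorm (condMeasure μ R z) q
            (fun x => projE (condMeasure μ R z) {j} g x - expect (condMeasure μ R z) g)
          ≤ γ * pnorm (condMeasure μ R z) q g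

noncomputable section ESAux

variable {d : ℕ} {Ω : Type} [Fintype Ω] [DecidableEq Ω]

/-- denominator of `projE` -/
def deno (w : (Fin d → Ω) → ℝ) (T : Finset (Fin d)) (x : Fin d → Ω) : ℝ :=
  ∑ y, if ∀ i ∈ T, y i = x i then w y else 0

/-- numerator of `projE` -/
def nume (w : (Fin d → Ω) → ℝ) (T : Finset (Fin d)) (f : (Fin d → Ω) → ℝ)
    (x : Fin d → Ω) : ℝ :=
  ∑ y, if ∀ i ∈ T, y i = x i then w y * f y else 0

lemma projE_def (w : (Fin d → Ω) → ℝ) (T : Finset (Fin d)) (f : (Fin d → Ω) → ℝ)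
    (x : Fin d → Ω) : projE w T f x = nume w T f x / deno w T x := rfl

lemma condMeasure_def (w : (Fin d → Ω) → ℝ) (R : Finset (Fin d)) (z y : Fin d → Ω) :
    condMeasure w R z y = (if ∀ i ∈ R, y i = z i then w y else 0) / deno w R z := rfl

variable {w : (Fin d → Ω) → ℝ} {T A B R : Finset (Fin d)} {f g : (Fin d → Ω) → ℝ}
  {x y z : Fin d → Ω}

lemma deno_nonneg (hw : ∀ x, 0 ≤ w x) : 0 ≤ deno w T x :=
  Finset.sum_nonneg (by intro y _; split <;> simp [hw y])

lemma le_deno (hw : ∀ x, 0 ≤ w x) : w x ≤ deno w T x := by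
  have h : (if ∀ i ∈ T, x i = x i then w x else 0) ≤ deno w T x := by
    apply Finset.single_le_sum (f := fun y => if ∀ i ∈ T, y i = x i then w y else 0)
    · intro y _; split <;> simp [hw y]
    · exact Finset.mem_univ x
  simpa using h

lemma deno_eq_zero (hw : ∀ x, 0 ≤ w x) (h : deno w T x = 0) :
    ∀ y, (∀ i ∈ T, y i = x i) → w y = 0 := by
  intro y hy
  have h0 := (Finset.sum_eq_zero_iff_of_nonneg
    (by intro u _; split <;> simp [hw u])).1 h y (Finset.mem_univ y)
  rwa [if_pos hy] at h0

lemma deno_pattern (h : ∀ i ∈ T, x i = y i) : deno w T x = deno w T y := by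
  apply Finset.sum_congr rfl; intro u _
  apply if_congr _ rfl rfl
  constructor
  · intro hu i hi; rw [hu i hi, h i hi]
  · intro hu i hi; rw [hu i hi, ← h i hi]

lemma nume_pattern (h : ∀ i ∈ T, x i = y i) : nume w T f x = nume w T f y := by
  apply Finset.sum_congr rfl; intro u _
  apply if_congr _ rfl rfl
  constructor
  · intro hu i hi; rw [hu i hi, h i hi]
  · intro hu i hi; rw [hu i hi, ← h i hi]

lemma projE_pattern (h : ∀ i ∈ T, x i = y i) : projE w T f x = projE w T f y := by
  rw [projE_def, projE_def, deno_pattern h, nume_pattern h]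

lemma nume_congr (h : ∀ y, w y ≠ 0 → f y = g y) : nume w T f x = nume w T g x := by
  apply Finset.sum_congr rfl; intro u _
  split
  · by_cases hu : w u = 0
    · simp [hu]
    · rw [h u hu]
  · rfl

lemma projE_congr (h : ∀ y, w y ≠ 0 → f y = g y) : projE w T f x = projE w T g x := by
  rw [projE_def, projE_def, nume_congr h]

/-- a `T`-junta is fixed by `projE w T` on the support of `w` -/
lemma projE_junta (hw : ∀ x, 0 ≤ w x)
    (hf : ∀ a b, (∀ i ∈ T, a i = b i) → f a = f b) (hx : w x ≠ 0) :
    projE w T f x = f x := by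
  have hD : deno w T x ≠ 0 := fun h0 => hx ((deno_eq_zero hw h0) x (fun i _ => rfl))
  have hN : nume w T f x = f x * deno w T x := by
    rw [deno, Finset.mul_sum, nume]
    apply Finset.sum_congr rfl; intro u _
    split
    · rename_i hu; rw [hf u x hu]; ring
    · ring
  rw [projE_def, hN, mul_div_assoc, div_self hD, mul_one]

lemma projE_sub :
    projE w T (fun y => f y - g y) x = projE w T f x - projE w T g x := by
  rw [projE_def, projE_def, projE_def, ← sub_div]
  congr 1
  rw [nume, nume, nume, ← Finset.sum_sub_distrib]
  apply Finset.sum_congr rfl; intro u _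
  split <;> ring

lemma projE_empty (hw1 : ∑ x, w x = 1) : projE w ∅ f x = expect w f := by
  rw [projE_def, nume, deno]
  simp only [Finset.notMem_empty, false_implies, implies_true, if_true]
  rw [hw1, div_one]; rfl

end ESAux
noncomputable section ESAux2

variable {d : ℕ} {Ω : Type} [Fintype Ω] [DecidableEq Ω]
variable {w : (Fin d → Ω) → ℝ} {T A B R : Finset (Fin d)} {f g : (Fin d → Ω) → ℝ}
  {x y z u : Fin d → Ω}

lemma deno_symm : (∑ y, if ∀ i ∈ B, u i = y i then w y else 0) = deno w B u := by
  apply Finset.sum_congr rfl; intro v _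
  apply if_congr _ rfl rfl
  constructor
  · intro h i hi; exact (h i hi).symm
  · intro h i hi; exact (h i hi).symm

lemma nume_eq_zero (hw : ∀ x, 0 ≤ w x) (hRT : R ⊆ T) (h : deno w R x = 0) :
    nume w T f x = 0 := by
  apply Finset.sum_eq_zero; intro v _
  split
  · rename_i hv
    rw [deno_eq_zero hw h v (fun i hi => hv i (hRT hi)), zero_mul]
  · rfl

/-- tower property: `E_A ∘ E_B = E_A` when `A ⊆ B` (exact identity). -/
lemma nume_proj (hw : ∀ x, 0 ≤ w x) (hAB : A ⊆ B) :
    nume w A (projE w B f) x = nume w A f x := by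
  have step1 : ∀ y, (if ∀ i ∈ A, y i = x i then w y * projE w B f y else 0)
      = ∑ u, if (∀ i ∈ A, y i = x i) ∧ (∀ i ∈ B, u i = y i) then
          (w y / deno w B y) * (w u * f u) else 0 := by
    intro y
    by_cases hy : ∀ i ∈ A, y i = x i
    · rw [if_pos hy, projE_def, nume]
      have : w y * ((∑ u, if ∀ i ∈ B, u i = y i then w u * f u else 0) / deno w B y)
          = ∑ u, (w y / deno w B y) * (if ∀ i ∈ B, u i = y i then w u * f u else 0) := by
        rw [← Finset.mul_sum]; ring
      rw [this]
      apply Finset.sum_congr rfl; intro u _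
      simp only [eq_true hy, true_and, mul_ite, mul_zero]
    · rw [if_neg hy]; symm
      apply Finset.sum_eq_zero; intro u _
      rw [if_neg (by tauto)]
  have step2 : ∀ u, (∑ y, if (∀ i ∈ A, y i = x i) ∧ (∀ i ∈ B, u i = y i) then
        (w y / deno w B y) * (w u * f u) else 0)
      = if ∀ i ∈ A, u i = x i then w u * f u else 0 := by
    intro u
    by_cases hDu : deno w B u = 0
    · have hwu : w u = 0 := le_antisymm (le_of_le_of_eq (le_deno hw) hDu) (hw u)
      rw [Finset.sum_eq_zero, eq_comm]
      · split <;> simp [hwu]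
      · intro v _; split
        · rename_i hc
          rw [deno_eq_zero hw hDu v (fun i hi => (hc.2 i hi).symm)]
          simp
        · rfl
    · have hcong : ∀ v, (if (∀ i ∈ A, v i = x i) ∧ (∀ i ∈ B, u i = v i) then
          (w v / deno w B v) * (w u * f u) else 0)
          = if (∀ i ∈ A, u i = x i) ∧ (∀ i ∈ B, u i = v i) then
          (w v / deno w B u) * (w u * f u) else 0 := by
        intro v
        by_cases hBv : ∀ i ∈ B, u i = v i
        · have hD : deno w B v = deno w B u := deno_pattern (fun i hi => (hBv i hi).symm)
          have hiff : (∀ i ∈ A, v i = x i) ↔ (∀ i ∈ A, u i = x i) := by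
            constructor
            · intro h i hi; rw [hBv i (hAB hi)]; exact h i hi
            · intro h i hi; rw [← hBv i (hAB hi)]; exact h i hi
          simp only [eq_true hBv, and_true, hD, hiff]
        · simp only [eq_false hBv, and_false, if_false]
      rw [Finset.sum_congr rfl (fun v _ => hcong v)]
      by_cases hAu : ∀ i ∈ A, u i = x i
      · simp only [eq_true hAu, true_and, if_true]
        have : ∑ v, (if ∀ i ∈ B, u i = v i then (w v / deno w B u) * (w u * f u) else 0)
            = (∑ v, if ∀ i ∈ B, u i = v i then w v else 0) / deno w B u * (w u * f u) := by
          rw [Finset.sum_div, Finset.sum_mul]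
          apply Finset.sum_congr rfl; intro v _
          by_cases hc : ∀ i ∈ B, u i = v i
          · simp [eq_true hc]
          · simp [eq_false hc]
        rw [this, deno_symm, div_self hDu, one_mul]
      · simp only [eq_false hAu, false_and, if_false, Finset.sum_const_zero]
  calc nume w A (projE w B f) x
      = ∑ y, ∑ u, (if (∀ i ∈ A, y i = x i) ∧ (∀ i ∈ B, u i = y i) then
          (w y / deno w B y) * (w u * f u) else 0) := by
        rw [nume]; exact Finset.sum_congr rfl (fun y _ => step1 y)
    _ = ∑ u, ∑ y, (if (∀ i ∈ A, y i = x i) ∧ (∀ i ∈ B, u i = y i) then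
          (w y / deno w B y) * (w u * f u) else 0) := Finset.sum_comm
    _ = ∑ u, (if ∀ i ∈ A, u i = x i then w u * f u else 0) :=
        Finset.sum_congr rfl (fun u _ => step2 u)
    _ = nume w A f x := rfl

lemma projE_proj (hw : ∀ x, 0 ≤ w x) (hAB : A ⊆ B) :
    projE w A (projE w B f) x = projE w A f x := by
  rw [projE_def, projE_def, nume_proj hw hAB]

lemma expect_nume (x : Fin d → Ω) : nume w ∅ g x = expect w g := by
  simp only [nume, Finset.notMem_empty, false_implies, implies_true, if_true]; rfl

lemma expect_congr (h : ∀ y, w y ≠ 0 → f y = g y) : expect w f = expect w g := by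
  apply Finset.sum_congr rfl; intro v _
  by_cases hv : w v = 0
  · simp [hv]
  · rw [h v hv]

/-- tower property for the expectation. -/
lemma expect_proj (hw : ∀ x, 0 ≤ w x) :
    expect w (projE w B f) = expect w f := by
  cases isEmpty_or_nonempty (Fin d → Ω) with
  | inl h => simp [_root_.expect]
  | inr h =>
    obtain ⟨x⟩ := h
    rw [← expect_nume (g := projE w B f) x, ← expect_nume (g := f) x,
      nume_proj hw (Finset.empty_subset B)]

end ESAux2
noncomputable section ESAux3
set_option linter.unusedSectionVars false

variable {d : ℕ} {Ω : Type} [Fintype Ω] [DecidableEq Ω]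
variable {w : (Fin d → Ω) → ℝ} {T A B R R' : Finset (Fin d)} {f g : (Fin d → Ω) → ℝ}
  {x y z z' u : Fin d → Ω}

lemma cond_nonneg (hw : ∀ x, 0 ≤ w x) : ∀ y, 0 ≤ condMeasure w R z y := by
  intro y
  rw [condMeasure_def]
  apply div_nonneg _ (deno_nonneg hw)
  split <;> simp [hw y]

lemma cond_sum_one (hw : ∀ x, 0 ≤ w x) (hD : deno w R z ≠ 0) :
    ∑ y, condMeasure w R z y = 1 := by
  have h1 : ∑ y, condMeasure w R z y
      = (∑ y, if ∀ i ∈ R, y i = z i then w y else 0) / deno w R z := by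
    rw [Finset.sum_div]; rfl
  rw [h1]
  exact div_self hD

lemma cond_zero (hD : deno w R z = 0) : ∀ y, condMeasure w R z y = 0 := by
  intro y; rw [condMeasure_def, hD, div_zero]

lemma cond_sum_one' (hw : ∀ x, 0 ≤ w x) (hz : w z ≠ 0) :
    ∑ y, condMeasure w R z y = 1 := by
  apply cond_sum_one hw
  intro h0
  exact hz (deno_eq_zero hw h0 z (fun i _ => rfl))

lemma cond_supp (hy : condMeasure w R z y ≠ 0) :
    (∀ i ∈ R, y i = z i) ∧ w y ≠ 0 := by
  rw [condMeasure_def] at hy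
  by_cases hc : ∀ i ∈ R, y i = z i
  · refine ⟨hc, ?_⟩; intro h0; rw [if_pos hc, h0, zero_div] at hy; exact hy rfl
  · rw [if_neg hc, zero_div] at hy; exact absurd rfl hy

lemma cond_pattern (h : ∀ i ∈ R, z i = z' i) :
    condMeasure w R z = condMeasure w R z' := by
  funext v
  rw [condMeasure_def, condMeasure_def, deno_pattern h]
  congr 1
  apply if_congr _ rfl rfl
  constructor
  · intro hv i hi; rw [hv i hi, h i hi]
  · intro hv i hi; rw [hv i hi, ← h i hi]

/-- global norm-type sums decompose into an average over links. -/
lemma decomp (hw : ∀ x, 0 ≤ w x) (R : Finset (Fin d)) (G : (Fin d → Ω) → ℝ) :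
    ∑ x, w x * G x = ∑ z, w z * (∑ y, condMeasure w R z y * G y) := by
  have step1 : ∀ z y, w z * (condMeasure w R z y * G y)
      = if ∀ i ∈ R, y i = z i then (w z / deno w R y) * (w y * G y) else 0 := by
    intro z y
    rw [condMeasure_def]
    by_cases hc : ∀ i ∈ R, y i = z i
    · rw [if_pos hc, if_pos hc, deno_pattern (fun i hi => (hc i hi).symm)]
      ring
    · rw [if_neg hc, if_neg hc, zero_div, zero_mul, mul_zero]
  have step2 : ∀ y, (∑ z, if ∀ i ∈ R, y i = z i then (w z / deno w R y) * (w y * G y) else 0)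
      = w y * G y := by
    intro y
    by_cases hD : deno w R y = 0
    · rw [Finset.sum_eq_zero, eq_comm, deno_eq_zero hw hD y (fun i _ => rfl), zero_mul]
      intro v _; rw [hD]
      split <;> simp
    · have : ∑ z, (if ∀ i ∈ R, y i = z i then (w z / deno w R y) * (w y * G y) else 0)
          = (∑ z, if ∀ i ∈ R, y i = z i then w z else 0) / deno w R y * (w y * G y) := by
        rw [Finset.sum_div, Finset.sum_mul]
        apply Finset.sum_congr rfl; intro v _
        by_cases hc : ∀ i ∈ R, y i = v i
        · simp [eq_true hc]
        · simp [eq_false hc]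
      rw [this, deno_symm, div_self hD, one_mul]
  calc ∑ x, w x * G x = ∑ y, ∑ z, (if ∀ i ∈ R, y i = z i then
          (w z / deno w R y) * (w y * G y) else 0) := by
        apply Finset.sum_congr rfl; intro y _; rw [step2 y]
    _ = ∑ z, ∑ y, (if ∀ i ∈ R, y i = z i then (w z / deno w R y) * (w y * G y) else 0) :=
        Finset.sum_comm
    _ = ∑ z, w z * (∑ y, condMeasure w R z y * G y) := by
        apply Finset.sum_congr rfl; intro v _
        rw [Finset.mul_sum]
        apply Finset.sum_congr rfl; intro y _
        rw [step1 v y]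

/-- localization: projecting onto `T ⊇ R` is the same as projecting onto `T \\ R`
in the link of `R` at the base point. -/
lemma projE_cond (hw : ∀ x, 0 ≤ w x) (hRT : R ⊆ T) :
    projE w T f x = projE (condMeasure w R x) (T \ R) f x := by
  have hiff : ∀ v : Fin d → Ω, (∀ i ∈ T, v i = x i) ↔
      ((∀ i ∈ T \ R, v i = x i) ∧ (∀ i ∈ R, v i = x i)) := by
    intro v
    constructor
    · intro h; exact ⟨fun i hi => h i (Finset.mem_sdiff.1 hi).1, fun i hi => h i (hRT hi)⟩
    · rintro ⟨h1, h2⟩ i hi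
      by_cases hiR : i ∈ R
      · exact h2 i hiR
      · exact h1 i (Finset.mem_sdiff.2 ⟨hi, hiR⟩)
  have hnum : nume (condMeasure w R x) (T \ R) f x = nume w T f x / deno w R x := by
    rw [nume, nume, Finset.sum_div]
    apply Finset.sum_congr rfl; intro v _
    rw [condMeasure_def]
    by_cases h1 : ∀ i ∈ T \ R, v i = x i
    · by_cases h2 : ∀ i ∈ R, v i = x i
      · rw [if_pos h1, if_pos h2, if_pos ((hiff v).2 ⟨h1, h2⟩)]
        ring
      · rw [if_pos h1, if_neg h2, if_neg (fun h => h2 ((hiff v).1 h).2)]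
        try simp
    · rw [if_neg h1, if_neg (fun h => h1 ((hiff v).1 h).1), zero_div]
  have hden : deno (condMeasure w R x) (T \ R) x = deno w T x / deno w R x := by
    rw [deno, deno, Finset.sum_div]
    apply Finset.sum_congr rfl; intro v _
    rw [condMeasure_def]
    by_cases h1 : ∀ i ∈ T \ R, v i = x i
    · by_cases h2 : ∀ i ∈ R, v i = x i
      · rw [if_pos h1, if_pos h2, if_pos ((hiff v).2 ⟨h1, h2⟩)]
      · rw [if_pos h1, if_neg h2, if_neg (fun h => h2 ((hiff v).1 h).2)]
        try simp
    · rw [if_neg h1, if_neg (fun h => h1 ((hiff v).1 h).1), zero_div]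
  rw [projE_def, projE_def, hnum, hden]
  by_cases hZ : deno w R x = 0
  · rw [hZ, div_zero, div_zero, nume_eq_zero hw hRT hZ, zero_div, zero_div]
  · by_cases hD : deno w T x = 0
    · rw [hD]
      simp
    · rw [div_div_eq_mul_div, div_mul_cancel₀ _ hZ]

end ESAux3
noncomputable section ESAux4
set_option linter.unusedSectionVars false

variable {d : ℕ} {Ω : Type} [Fintype Ω] [DecidableEq Ω]
variable {w : (Fin d → Ω) → ℝ} {T A B R : Finset (Fin d)} {f g F G : (Fin d → Ω) → ℝ}
  {x y z u : Fin d → Ω} {q K : ℝ}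

lemma pnorm_nonneg (hw : ∀ x, 0 ≤ w x) : 0 ≤ pnorm w q F :=
  Real.rpow_nonneg (Finset.sum_nonneg (fun x _ =>
    mul_nonneg (hw x) (Real.rpow_nonneg (abs_nonneg _) q))) _

lemma pnorm_sum_nonneg (hw : ∀ x, 0 ≤ w x) :
    0 ≤ ∑ x, w x * |F x| ^ q :=
  Finset.sum_nonneg (fun x _ => mul_nonneg (hw x) (Real.rpow_nonneg (abs_nonneg _) q))

lemma pnorm_congr (h : ∀ x, w x ≠ 0 → F x = G x) : pnorm w q F = pnorm w q G := by
  rw [pnorm, pnorm]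
  congr 1
  apply Finset.sum_congr rfl; intro v _
  by_cases hv : w v = 0
  · rw [hv, zero_mul, zero_mul]
  · rw [h v hv]

lemma pnorm_zero_on_supp (hq : q ≠ 0) (h : ∀ x, w x ≠ 0 → F x = 0) :
    pnorm w q F = 0 := by
  rw [pnorm]
  have : ∑ x, w x * |F x| ^ q = 0 := by
    apply Finset.sum_eq_zero; intro v _
    by_cases hv : w v = 0
    · rw [hv, zero_mul]
    · rw [h v hv, abs_zero, Real.zero_rpow hq, mul_zero]
  rw [this, Real.zero_rpow (one_div_ne_zero hq)]

lemma pnorm_zero_meas (hq : q ≠ 0) (h : ∀ x, w x = 0) : pnorm w q F = 0 :=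
  pnorm_zero_on_supp hq (fun x hx => absurd (h x) hx)

lemma pnorm_pow (hw : ∀ x, 0 ≤ w x) (hq : q ≠ 0) :
    (pnorm w q F) ^ q = ∑ x, w x * |F x| ^ q := by
  rw [pnorm, ← Real.rpow_mul (pnorm_sum_nonneg hw), one_div_mul_cancel hq, Real.rpow_one]

/-- weighted Minkowski inequality -/
lemma pnorm_add_le (hw : ∀ x, 0 ≤ w x) (hq : 1 ≤ q) :
    pnorm w q (fun x => F x + G x) ≤ pnorm w q F + pnorm w q G := by
  have hq0 : q ≠ 0 := by positivity
  have key : ∀ (H : (Fin d → Ω) → ℝ) (x : Fin d → Ω),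
      |w x ^ (1/q) * H x| ^ q = w x * |H x| ^ q := by
    intro H x
    rw [abs_mul, abs_of_nonneg (Real.rpow_nonneg (hw x) _),
      Real.mul_rpow (Real.rpow_nonneg (hw x) _) (abs_nonneg _),
      ← Real.rpow_mul (hw x), one_div_mul_cancel hq0, Real.rpow_one]
  have h1 : ∑ x, w x * |F x + G x| ^ q
      = ∑ x, |(w x ^ (1/q) * F x) + (w x ^ (1/q) * G x)| ^ q := by
    apply Finset.sum_congr rfl; intro v _
    rw [← mul_add, key (fun x => F x + G x) v]
  have h2 : ∑ x, w x * |F x| ^ q = ∑ x, |w x ^ (1/q) * F x| ^ q := by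
    apply Finset.sum_congr rfl; intro v _; rw [key F v]
  have h3 : ∑ x, w x * |G x| ^ q = ∑ x, |w x ^ (1/q) * G x| ^ q := by
    apply Finset.sum_congr rfl; intro v _; rw [key G v]
  rw [pnorm, pnorm, pnorm, h1, h2, h3]
  exact Real.Lp_add_le Finset.univ _ _ hq

lemma pnorm_sum_le {ι : Type*} (s : Finset ι) (Fs : ι → (Fin d → Ω) → ℝ)
    (hw : ∀ x, 0 ≤ w x) (hq : 1 ≤ q) :
    pnorm w q (fun x => ∑ i ∈ s, Fs i x) ≤ ∑ i ∈ s, pnorm w q (Fs i) := by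
  have hq0 : q ≠ 0 := by positivity
  induction s using Finset.cons_induction with
  | empty =>
    simp only [Finset.sum_empty]
    rw [pnorm_zero_on_supp hq0 (fun _ _ => rfl)]
  | cons a s ha ih =>
    simp only [Finset.sum_cons]
    calc pnorm w q (fun x => Fs a x + ∑ i ∈ s, Fs i x)
        ≤ pnorm w q (Fs a) + pnorm w q (fun x => ∑ i ∈ s, Fs i x) := pnorm_add_le hw hq
      _ ≤ pnorm w q (Fs a) + ∑ i ∈ s, pnorm w q (Fs i) := by linarith
      _ = _ := rfl

lemma pnorm_smul (hw : ∀ x, 0 ≤ w x) (hq : 0 < q) (c : ℝ) :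
    pnorm w q (fun x => c * F x) = |c| * pnorm w q F := by
  have hq0 : q ≠ 0 := ne_of_gt hq
  have h1 : ∑ x, w x * |c * F x| ^ q = |c| ^ q * ∑ x, w x * |F x| ^ q := by
    rw [Finset.mul_sum]
    apply Finset.sum_congr rfl; intro v _
    rw [abs_mul, Real.mul_rpow (abs_nonneg _) (abs_nonneg _)]
    ring
  rw [pnorm, pnorm, h1,
    Real.mul_rpow (Real.rpow_nonneg (abs_nonneg _) _) (pnorm_sum_nonneg hw),
    ← Real.rpow_mul (abs_nonneg _), mul_one_div_cancel hq0, Real.rpow_one]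

/-- conditional Jensen: `|E_T f|^q ≤ E_T |f|^q` pointwise on the support. -/
lemma proj_jensen (hw : ∀ x, 0 ≤ w x) (hq : 1 ≤ q) (hx : w x ≠ 0) :
    |projE w T f x| ^ q ≤ projE w T (fun y => |f y| ^ q) x := by
  have hD0 : 0 < deno w T x :=
    lt_of_le_of_ne (deno_nonneg hw) (fun h0 => hx (deno_eq_zero hw h0.symm x (fun i _ => rfl)))
  set p : (Fin d → Ω) → ℝ := fun y => (if ∀ i ∈ T, y i = x i then w y else 0) / deno w T x
    with hpdef
  have hpnn : ∀ y ∈ Finset.univ (α := Fin d → Ω), 0 ≤ p y := by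
    intro y _
    apply div_nonneg _ hD0.le
    split
    · exact hw y
    · exact le_rfl
  have hpsum : ∑ y, p y = 1 := by
    rw [hpdef, ← Finset.sum_div]
    exact div_self (ne_of_gt hD0)
  have hNf : projE w T f x = ∑ y, p y * f y := by
    rw [projE_def, nume, Finset.sum_div]
    apply Finset.sum_congr rfl; intro v _
    rw [hpdef]
    by_cases hc : ∀ i ∈ T, v i = x i
    · simp only [eq_true hc, if_true]; ring
    · simp only [eq_false hc, if_false]; simp
  have hNg : projE w T (fun y => |f y| ^ q) x = ∑ y, p y * |f y| ^ q := by
    rw [projE_def, nume, Finset.sum_div]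
    apply Finset.sum_congr rfl; intro v _
    rw [hpdef]
    by_cases hc : ∀ i ∈ T, v i = x i
    · simp only [eq_true hc, if_true]; ring
    · simp only [eq_false hc, if_false]; simp
  rw [hNf, hNg]
  calc |∑ y, p y * f y| ^ q ≤ (∑ y, p y * |f y|) ^ q := by
        apply Real.rpow_le_rpow (abs_nonneg _) _ (le_trans zero_le_one hq)
        refine le_trans (Finset.abs_sum_le_sum_abs _ _) ?_
        apply Finset.sum_le_sum; intro y hy
        rw [abs_mul, abs_of_nonneg (hpnn y hy)]
    _ ≤ ∑ y, p y * |f y| ^ q :=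
        Real.rpow_arith_mean_le_arith_mean_rpow Finset.univ p (fun y => |f y|) hpnn hpsum
          (fun y _ => abs_nonneg _) hq

/-- contractivity of conditional expectation in `L^q`. -/
lemma pnorm_proj_le (hw : ∀ x, 0 ≤ w x) (hq : 1 ≤ q) :
    pnorm w q (projE w T f) ≤ pnorm w q f := by
  rw [pnorm, pnorm]
  apply Real.rpow_le_rpow (pnorm_sum_nonneg hw) _ (by positivity)
  calc ∑ x, w x * |projE w T f x| ^ q
      ≤ ∑ x, w x * projE w T (fun y => |f y| ^ q) x := by
        apply Finset.sum_le_sum; intro v _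
        by_cases hv : w v = 0
        · rw [hv, zero_mul, zero_mul]
        · exact mul_le_mul_of_nonneg_left (proj_jensen hw hq hv) (hw v)
    _ = ∑ x, w x * |f x| ^ q := expect_proj (B := T) (f := fun y => |f y| ^ q) hw

/-- a norm bound valid in every link of `R` can be averaged to the global measure. -/
lemma pnorm_links (hw : ∀ x, 0 ≤ w x) (R : Finset (Fin d)) (hq : 0 < q) (hK : 0 ≤ K)
    (h : ∀ z, w z ≠ 0 → pnorm (condMeasure w R z) q F ≤ K * pnorm (condMeasure w R z) q G) :
    pnorm w q F ≤ K * pnorm w q G := by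
  have hq0 : q ≠ 0 := ne_of_gt hq
  have hstep : ∑ x, w x * |F x| ^ q ≤ K ^ q * ∑ x, w x * |G x| ^ q := by
    rw [decomp hw R (fun y => |F y| ^ q), decomp hw R (fun y => |G y| ^ q), Finset.mul_sum]
    apply Finset.sum_le_sum; intro z _
    by_cases hz : w z = 0
    · rw [hz]; simp
    · have hνnn := cond_nonneg (R := R) (z := z) hw
      have e1 := pnorm_pow (w := condMeasure w R z) (F := F) (q := q) hνnn hq0
      have e2 := pnorm_pow (w := condMeasure w R z) (F := G) (q := q) hνnn hq0
      rw [← e1, ← e2]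
      have h3 : (pnorm (condMeasure w R z) q F) ^ q
          ≤ (K * pnorm (condMeasure w R z) q G) ^ q :=
        Real.rpow_le_rpow (pnorm_nonneg hνnn) (h z hz) hq.le
      rw [Real.mul_rpow hK (pnorm_nonneg hνnn)] at h3
      calc w z * (pnorm (condMeasure w R z) q F) ^ q
          ≤ w z * (K ^ q * (pnorm (condMeasure w R z) q G) ^ q) :=
            mul_le_mul_of_nonneg_left h3 (hw z)
        _ = K ^ q * (w z * (pnorm (condMeasure w R z) q G) ^ q) := by ring
  rw [pnorm, pnorm]
  calc (∑ x, w x * |F x| ^ q) ^ (1/q)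
      ≤ (K ^ q * ∑ x, w x * |G x| ^ q) ^ (1/q) :=
        Real.rpow_le_rpow (pnorm_sum_nonneg hw) hstep (by positivity)
    _ = K * (∑ x, w x * |G x| ^ q) ^ (1/q) := by
        rw [Real.mul_rpow (Real.rpow_nonneg hK _) (pnorm_sum_nonneg hw),
          ← Real.rpow_mul hK, mul_one_div_cancel hq0, Real.rpow_one]

end ESAux4
noncomputable section ESAux5
set_option linter.unusedSectionVars false

variable {d : ℕ} {Ω : Type} [Fintype Ω] [DecidableEq Ω]
variable {w m : (Fin d → Ω) → ℝ} {T A B R R' : Finset (Fin d)} {f g F G : (Fin d → Ω) → ℝ}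
  {x y z z' u : Fin d → Ω} {q γ K : ℝ} {n : ℕ}

/-- relative version of `IsQGammaProduct` with an explicit dimension budget `n`. -/
def Good (w : (Fin d → Ω) → ℝ) (q γ : ℝ) (n : ℕ) : Prop :=
  ∀ (R : Finset (Fin d)) (z : Fin d → Ω), R.card + 2 ≤ n →
    ∀ i j : Fin d, i ∉ R → j ∉ R → i ≠ j →
      ∀ g : (Fin d → Ω) → ℝ, (∀ x y, x i = y i → g x = g y) →
        pnorm (condMeasure w R z) q
            (fun x => projE (condMeasure w R z) {j} g x - expect (condMeasure w R z) g)
          ≤ γ * pnorm (condMeasure w R z) q g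

lemma cond_sum_one'' (hw : ∀ x, 0 ≤ w x) (hx : condMeasure w R z x ≠ 0) :
    ∑ y, condMeasure w R z y = 1 :=
  cond_sum_one hw (fun h0 => hx (by rw [condMeasure_def, h0, div_zero]))

lemma const_on_supp_projE (hm : ∀ x, 0 ≤ m x)
    (hc : ∀ a b, m a ≠ 0 → m b ≠ 0 → g a = g b) (hx : m x ≠ 0) :
    projE m A g x = g x := by
  have hD : deno m A x ≠ 0 := fun h0 => hx (deno_eq_zero hm h0 x (fun i _ => rfl))
  have hN : nume m A g x = g x * deno m A x := by
    rw [deno, Finset.mul_sum, nume]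
    apply Finset.sum_congr rfl; intro v _
    split
    · by_cases hv : m v = 0
      · rw [hv]; ring
      · rw [hc v x hv hx]; ring
    · ring
  rw [projE_def, hN, mul_div_assoc, div_self hD, mul_one]

lemma expect_const_on_supp (hsum : ∑ y, m y = 1)
    (hc : ∀ a b, m a ≠ 0 → m b ≠ 0 → g a = g b) (hx : m x ≠ 0) :
    expect m g = g x := by
  have : expect m g = ∑ y, m y * g x := by
    apply Finset.sum_congr rfl; intro v _
    by_cases hv : m v = 0
    · rw [hv, zero_mul, zero_mul]
    · rw [hc v x hv hx]
  rw [this, ← Finset.sum_mul, hsum, one_mul]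

lemma projE_eq_expect_of_fixed (hm : ∀ x, 0 ≤ m x) (hsum : ∑ y, m y = 1) {j : Fin d} {c : Ω}
    (hfix : ∀ y, m y ≠ 0 → y j = c) (hx : m x ≠ 0) :
    projE m {j} g x = expect m g := by
  have hN : nume m {j} g x = expect m g := by
    rw [nume]
    apply Finset.sum_congr rfl; intro v _
    by_cases hv : m v = 0
    · rw [hv]; simp
    · rw [if_pos]
      intro i hi
      rw [Finset.mem_singleton] at hi
      subst hi
      rw [hfix v hv, hfix x hx]
  have hD : deno m {j} x = ∑ y, m y := by
    rw [deno]
    apply Finset.sum_congr rfl; intro v _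
    by_cases hv : m v = 0
    · rw [hv]; simp
    · rw [if_pos]
      intro i hi
      rw [Finset.mem_singleton] at hi
      subst hi
      rw [hfix v hv, hfix x hx]
  rw [projE_def, hN, hD, hsum, div_one]

/-- composing two conditionings gives the conditioning on the union pattern. -/
lemma cond_cond (hw : ∀ x, 0 ≤ w x) {v : Fin d → Ω}
    (hv : ∀ y : Fin d → Ω,
      ((∀ i ∈ A, y i = z i) ∧ (∀ i ∈ B, y i = z' i)) ↔ (∀ i ∈ A ∪ B, y i = v i)) :
    condMeasure (condMeasure w A z) B z' = condMeasure w (A ∪ B) v := by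
  have hite : ∀ (u : Fin d → Ω) (a : ℝ),
      (if ∀ i ∈ B, u i = z' i then (if ∀ i ∈ A, u i = z i then a else 0) else 0)
      = (if ∀ i ∈ A ∪ B, u i = v i then a else 0) := by
    intro u a
    by_cases hB : ∀ i ∈ B, u i = z' i
    · by_cases hA : ∀ i ∈ A, u i = z i
      · rw [if_pos hB, if_pos hA, if_pos ((hv u).1 ⟨hA, hB⟩)]
      · rw [if_pos hB, if_neg hA, if_neg (fun h => hA ((hv u).2 h).1)]
    · rw [if_neg hB, if_neg (fun h => hB ((hv u).2 h).2)]
  funext y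
  set Z := deno w A z with hZdef
  by_cases hZ : Z = 0
  · have hν0 : ∀ u, condMeasure w A z u = 0 := cond_zero hZ
    have hU0 : deno w (A ∪ B) v = 0 := by
      rw [deno]
      apply Finset.sum_eq_zero; intro u _
      split
      · rename_i hu
        exact deno_eq_zero hw hZ u ((hv u).2 hu).1
      · rfl
    show (if ∀ i ∈ B, y i = z' i then condMeasure w A z y else 0)
        / deno (condMeasure w A z) B z'
      = (if ∀ i ∈ A ∪ B, y i = v i then w y else 0) / deno w (A ∪ B) v
    rw [hν0 y, hU0, div_zero, ite_self, zero_div]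
  · have hden : deno (condMeasure w A z) B z' = deno w (A ∪ B) v / Z := by
      rw [deno, deno, Finset.sum_div]
      apply Finset.sum_congr rfl; intro u _
      rw [condMeasure_def, ← hZdef]
      by_cases hB : ∀ i ∈ B, u i = z' i
      · rw [if_pos hB, ← hite u (w u), if_pos hB]
      · rw [if_neg hB, ← hite u (w u), if_neg hB, zero_div]
    show (if ∀ i ∈ B, y i = z' i then condMeasure w A z y else 0)
        / deno (condMeasure w A z) B z'
      = (if ∀ i ∈ A ∪ B, y i = v i then w y else 0) / deno w (A ∪ B) v
    rw [hden, condMeasure_def, ← hZdef]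
    by_cases hB : ∀ i ∈ B, y i = z' i
    · rw [if_pos hB]
      have hnum : (if ∀ i ∈ A, y i = z i then w y else 0)
          = (if ∀ i ∈ A ∪ B, y i = v i then w y else 0) := by
        rw [← hite y (w y), if_pos hB]
      rw [hnum]
      by_cases hU : deno w (A ∪ B) v = 0
      · rw [hU]
        simp
      · rw [div_div_eq_mul_div, div_mul_cancel₀ _ hZ]
    · rw [if_neg hB]
      have h0 : (if ∀ i ∈ A ∪ B, y i = v i then w y else 0) = 0 := by
        rw [← hite y (w y), if_neg hB]
      rw [h0, zero_div, zero_div]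

end ESAux5
noncomputable section ESAux6
set_option linter.unusedSectionVars false

variable {d : ℕ} {Ω : Type} [Fintype Ω] [DecidableEq Ω]
variable {w : (Fin d → Ω) → ℝ} {q γ : ℝ} {n : ℕ}

/-- links of a good measure are good (with reduced dimension budget). -/
lemma good_cond (hw : ∀ x, 0 ≤ w x) (hγ : 0 ≤ γ) (hq : 1 < q)
    (hGood : Good w q γ n) (R : Finset (Fin d)) (z : Fin d → Ω) :
    Good (condMeasure w R z) q γ (n - R.card) := by
  intro R' z' hcard i j hiR' hjR' hij g hg
  have hq0 : q ≠ 0 := by positivity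
  set ν := condMeasure w R z with hν
  by_cases hcons : ∀ t ∈ R, t ∈ R' → z t = z' t
  · -- consistent patterns: the double link is a link of `w`
    set v : Fin d → Ω := fun t => if t ∈ R' then z' t else z t with hvdef
    have hv : ∀ y : Fin d → Ω,
        ((∀ i ∈ R, y i = z i) ∧ (∀ i ∈ R', y i = z' i)) ↔ (∀ i ∈ R ∪ R', y i = v i) := by
      intro y
      constructor
      · rintro ⟨h1, h2⟩ t ht
        rw [hvdef]; dsimp only
        by_cases htR' : t ∈ R'
        · rw [if_pos htR']; exact h2 t htR'
        · rw [if_neg htR']; exact h1 t ((Finset.mem_union.1 ht).resolve_right htR')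
      · intro h
        constructor
        · intro t ht
          have h2 := h t (Finset.mem_union_left _ ht)
          rw [hvdef] at h2; dsimp only at h2
          by_cases htR' : t ∈ R'
          · rw [if_pos htR'] at h2; rw [h2, ← hcons t ht htR']
          · rwa [if_neg htR'] at h2
        · intro t ht
          have h2 := h t (Finset.mem_union_right _ ht)
          rw [hvdef] at h2; dsimp only at h2
          rwa [if_pos ht] at h2
    have hcc : condMeasure ν R' z' = condMeasure w (R ∪ R') v := cond_cond hw hv
    rw [hcc]
    set m := condMeasure w (R ∪ R') v with hm
    have hmnn : ∀ x, 0 ≤ m x := cond_nonneg hw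
    by_cases hiR : i ∈ R
    · -- the `i`-th coordinate is fixed in the link, so `g` is constant on the support
      have hconst : ∀ a b, m a ≠ 0 → m b ≠ 0 → g a = g b := by
        intro a b ha hb
        apply hg
        rw [(cond_supp ha).1 i (Finset.mem_union_left _ hiR),
          (cond_supp hb).1 i (Finset.mem_union_left _ hiR)]
      have hvanish : ∀ x, m x ≠ 0 → projE m {j} g x - expect m g = 0 := by
        intro x hx
        rw [const_on_supp_projE hmnn hconst hx,
          expect_const_on_supp (cond_sum_one'' hw hx) hconst hx, sub_self]
      rw [pnorm_zero_on_supp hq0 hvanish]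
      exact mul_nonneg hγ (pnorm_nonneg hmnn)
    · by_cases hjR : j ∈ R
      · -- the `j`-th coordinate is fixed in the link
        have hfix : ∀ y, m y ≠ 0 → y j = v j := by
          intro y hy
          exact (cond_supp hy).1 j (Finset.mem_union_left _ hjR)
        have hvanish : ∀ x, m x ≠ 0 → projE m {j} g x - expect m g = 0 := by
          intro x hx
          rw [projE_eq_expect_of_fixed hmnn (cond_sum_one'' hw hx) hfix hx, sub_self]
        rw [pnorm_zero_on_supp hq0 hvanish]
        exact mul_nonneg hγ (pnorm_nonneg hmnn)
      · -- genuine link of codimension `|R ∪ R'|`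
        have hcard2 : (R ∪ R').card + 2 ≤ n := by
          have h1 : (R ∪ R').card ≤ R.card + R'.card := Finset.card_union_le R R'
          omega
        exact hGood (R ∪ R') v hcard2 i j
          (fun h => ((Finset.mem_union.1 h).elim hiR hiR'))
          (fun h => ((Finset.mem_union.1 h).elim hjR hjR')) hij g hg
  · -- inconsistent patterns: the double link carries zero measure
    push_neg at hcons
    obtain ⟨t, htR, htR', htz⟩ := hcons
    have hzero : ∀ y, condMeasure ν R' z' y = 0 := by
      intro y
      rw [condMeasure_def]
      by_cases hB : ∀ i ∈ R', y i = z' i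
      · have hνy : ν y = 0 := by
          by_cases hν0 : ν y = 0
          · exact hν0
          · exact absurd (by rw [← (cond_supp hν0).1 t htR, hB t htR']) htz
        rw [if_pos hB, hνy, zero_div]
      · rw [if_neg hB, zero_div]
    rw [pnorm_zero_meas hq0 hzero, pnorm_zero_meas hq0 hzero, mul_zero]

end ESAux6
noncomputable section ESAux7
set_option linter.unusedSectionVars false

variable {d : ℕ} {Ω : Type} [Fintype Ω] [DecidableEq Ω]

/-- Key lemma: `‖E_j E_{T'} f − E_∅ f‖_q ≤ γ |T'| ‖f‖_q` for `j ∉ T'`. -/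
lemma key_single {q γ : ℝ} (hq : 1 < q) (hγ : 0 ≤ γ)
    (w : (Fin d → Ω) → ℝ) (hw : ∀ x, 0 ≤ w x)
    (hpoz : (∑ x, w x = 1) ∨ ∀ x, w x = 0)
    {n : ℕ} (hGood : Good w q γ n) :
    ∀ (k : ℕ) (T' : Finset (Fin d)) (j : Fin d) (f : (Fin d → Ω) → ℝ),
      j ∉ T' → T'.card = k → k + 1 ≤ n →
      pnorm w q (fun x => projE w {j} (projE w T' f) x - projE w ∅ f x)
        ≤ γ * k * pnorm w q f := by
  have hq0 : q ≠ 0 := by positivity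
  intro k
  induction k with
  | zero =>
    intro T' j f hjT' hcard _
    have hT' : T' = ∅ := Finset.card_eq_zero.1 hcard
    subst hT'
    have hvanish : ∀ x, w x ≠ 0 → projE w {j} (projE w ∅ f) x - projE w ∅ f x = 0 := by
      intro x hx
      cases hpoz with
      | inr h0 => exact absurd (h0 x) hx
      | inl hw1 =>
        have hconst : ∀ a b, w a ≠ 0 → w b ≠ 0 → projE w ∅ f a = projE w ∅ f b := by
          intro a b _ _; rw [projE_empty hw1, projE_empty hw1]
        rw [const_on_supp_projE hw hconst hx, sub_self]
    rw [pnorm_zero_on_supp hq0 hvanish]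
    simp
  | succ k ih =>
    intro T' j f hjT' hcard hn
    cases hpoz with
    | inr h0 =>
      rw [pnorm_zero_meas hq0 h0, pnorm_zero_meas hq0 h0, mul_zero]
    | inl hw1 =>
      obtain ⟨i, hiT'⟩ := Finset.card_pos.1 (by rw [hcard]; exact Nat.succ_pos k)
      set W' := T'.erase i with hW'def
      have hWcard : W'.card = k := by
        rw [hW'def, Finset.card_erase_of_mem hiT', hcard]
        omega
      have hjW' : j ∉ W' := fun h => hjT' (Finset.mem_of_mem_erase h)
      have hij : i ≠ j := fun h => hjT' (h ▸ hiT')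
      have hiW' : i ∉ W' := Finset.notMem_erase i T'
      have hjsub : {j} ⊆ insert j W' :=
        Finset.singleton_subset_iff.2 (Finset.mem_insert_self j W')
      have hIsd : insert j W' \ W' = {j} := by
        ext t
        simp only [Finset.mem_sdiff, Finset.mem_insert, Finset.mem_singleton]
        constructor
        · rintro ⟨h1, h2⟩; exact h1.resolve_right h2
        · rintro rfl; exact ⟨Or.inl rfl, hjW'⟩
      have hTsd : T' \ W' = {i} := by
        ext t
        simp only [hW'def, Finset.mem_sdiff, Finset.mem_erase, Finset.mem_singleton, not_and]
        constructor
        · rintro ⟨htT, hnot⟩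
          by_contra hne
          exact hnot hne htT
        · rintro rfl; exact ⟨hiT', fun hne _ => absurd rfl hne⟩
      set vt : (Fin d → Ω) → ℝ :=
        fun y => projE w (insert j W') (projE w T' f) y - projE w W' f y with hvtdef
      -- per-link bound for `vt`
      have hlink : ∀ z, w z ≠ 0 →
          pnorm (condMeasure w W' z) q vt ≤ γ * pnorm (condMeasure w W' z) q f := by
        intro z hz
        set ν := condMeasure w W' z with hνdef
        have hνnn : ∀ x, 0 ≤ ν x := cond_nonneg hw
        have hν1 : ∑ y, ν y = 1 := cond_sum_one' hw hz
        set hhat : (Fin d → Ω) → ℝ :=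
          fun y => projE w T' f (fun t => if t ∈ W' then z t else y t) with hhatdef
        have hjunta : ∀ a b : Fin d → Ω, a i = b i → hhat a = hhat b := by
          intro a b hab
          apply projE_pattern
          intro t ht
          by_cases htW : t ∈ W'
          · rw [if_pos htW, if_pos htW]
          · rw [if_neg htW, if_neg htW]
            have hti : t = i := by
              by_contra hne
              exact htW (Finset.mem_erase.2 ⟨hne, ht⟩)
            rw [hti]; exact hab
        have hsupppat : ∀ y : Fin d → Ω, ν y ≠ 0 → (∀ t ∈ W', y t = z t) ∧ w y ≠ 0 :=
          fun y hy => cond_supp hy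
        have hheq : ∀ y, ν y ≠ 0 → hhat y = projE w T' f y := by
          intro y hy
          have hpat := (hsupppat y hy).1
          have hfun : (fun t => if t ∈ W' then z t else y t) = y := by
            funext t
            by_cases htW : t ∈ W'
            · rw [if_pos htW]; exact (hpat t htW).symm
            · rw [if_neg htW]
          rw [hhatdef]; dsimp only; rw [hfun]
        have hcondpat : ∀ y : Fin d → Ω, ν y ≠ 0 → condMeasure w W' y = ν := by
          intro y hy
          rw [hνdef]
          exact cond_pattern (hsupppat y hy).1
        have hproj_i : ∀ u, ν u ≠ 0 → projE w T' f u = projE ν {i} f u := by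
          intro u hu
          rw [projE_cond hw (Finset.erase_subset i T' : W' ⊆ T') (f := f) (x := u),
            ← hW'def, hTsd, hcondpat u hu]
        have hGoodApp := hGood W' z (by rw [hWcard]; omega) i j hiW' hjW' hij hhat hjunta
        have hvt_on : ∀ y, ν y ≠ 0 → vt y = projE ν {j} hhat y - expect ν hhat := by
          intro y hy
          have e1 : projE w (insert j W') (projE w T' f) y
              = projE ν {j} (projE w T' f) y := by
            rw [projE_cond hw (Finset.subset_insert j W') (f := projE w T' f) (x := y),
              hIsd, hcondpat y hy]
          have e2 : projE ν {j} (projE w T' f) y = projE ν {j} hhat y :=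
            projE_congr (fun u hu => (hheq u hu).symm)
          have e3 : projE w W' f y = expect ν f := by
            rw [projE_cond hw (Finset.Subset.refl W') (f := f) (x := y),
              Finset.sdiff_self, hcondpat y hy, projE_empty hν1]
          have e4 : expect ν hhat = expect ν f := by
            calc expect ν hhat = expect ν (projE w T' f) := expect_congr hheq
              _ = expect ν (projE ν {i} f) := expect_congr hproj_i
              _ = expect ν f := expect_proj hνnn
          rw [hvtdef]; dsimp only
          rw [e1, e2, e3, e4]
        calc pnorm ν q vt
            = pnorm ν q (fun x => projE ν {j} hhat x - expect ν hhat) :=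
              pnorm_congr hvt_on
          _ ≤ γ * pnorm ν q hhat := hGoodApp
          _ = γ * pnorm ν q (projE ν {i} f) := by
              rw [pnorm_congr (q := q) (fun u hu => (hheq u hu).trans (hproj_i u hu))]
          _ ≤ γ * pnorm ν q f :=
              mul_le_mul_of_nonneg_left (pnorm_proj_le hνnn hq.le) hγ
      have hvtbound : pnorm w q vt ≤ γ * pnorm w q f :=
        pnorm_links hw W' (by positivity) hγ hlink
      have hABle : pnorm w q (fun x => projE w {j} (projE w T' f) x
          - projE w {j} (projE w W' f) x) ≤ γ * pnorm w q f := by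
        have hAB : (fun x => projE w {j} (projE w T' f) x - projE w {j} (projE w W' f) x)
            = fun x => projE w {j} vt x := by
          funext x
          rw [← projE_sub,
            ← projE_proj hw hjsub (f := fun y => projE w T' f y - projE w W' f y)]
          apply projE_congr
          intro y hy
          rw [projE_sub, hvtdef]
          dsimp only
          congr 1
          apply projE_junta hw ?_ hy
          intro a b hab
          exact projE_pattern (fun t ht => hab t (Finset.mem_insert_of_mem ht))
        rw [hAB]
        exact le_trans (pnorm_proj_le hw hq.le) hvtbound
      have hsplit : (fun x => projE w {j} (projE w T' f) x - projE w ∅ f x)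
          = fun x => (projE w {j} (projE w T' f) x - projE w {j} (projE w W' f) x)
              + (projE w {j} (projE w W' f) x - projE w ∅ f x) := by
        funext x; ring
      rw [hsplit]
      have h2 := ih W' j f hjW' hWcard (by omega)
      calc pnorm w q (fun x => (projE w {j} (projE w T' f) x - projE w {j} (projE w W' f) x)
              + (projE w {j} (projE w W' f) x - projE w ∅ f x))
          ≤ pnorm w q (fun x => projE w {j} (projE w T' f) x - projE w {j} (projE w W' f) x)
            + pnorm w q (fun x => projE w {j} (projE w W' f) x - projE w ∅ f x) :=
            pnorm_add_le hw hq.le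
        _ ≤ γ * pnorm w q f + γ * k * pnorm w q f := add_le_add hABle h2
        _ = γ * (k + 1 : ℕ) * pnorm w q f := by push_cast; ring

end ESAux7

noncomputable section ESAux8
set_option linter.unusedSectionVars false

variable {d : ℕ} {Ω : Type} [Fintype Ω] [DecidableEq Ω]

/-- `‖E_T E_{T'} f − E_{T∩T'} f‖_q ≤ γ |T| |T'| ‖f‖_q`. -/
lemma key_general {q γ : ℝ} (hq : 1 < q) (hγ : 0 ≤ γ) :
    ∀ (m : ℕ) (w : (Fin d → Ω) → ℝ), (∀ x, 0 ≤ w x) →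
      ((∑ x, w x = 1) ∨ ∀ x, w x = 0) →
      ∀ n : ℕ, Good w q γ n →
      ∀ (T T' : Finset (Fin d)) (f : (Fin d → Ω) → ℝ),
        T.card + T'.card = m → (T ∪ T').card ≤ n →
        pnorm w q (fun x => projE w T (projE w T' f) x - projE w (T ∩ T') f x)
          ≤ γ * T.card * T'.card * pnorm w q f := by
  have hq0 : q ≠ 0 := by positivity
  intro m
  induction m using Nat.strong_induction_on with
  | _ m IH =>
  intro w hw hpoz n hGood T T' f hm hcard
  cases hpoz with
  | inr h0 =>
    rw [pnorm_zero_meas hq0 h0, pnorm_zero_meas hq0 h0, mul_zero]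
  | inl hw1 =>
  have RHSnn : 0 ≤ γ * T.card * T'.card * pnorm w q f :=
    mul_nonneg (mul_nonneg (mul_nonneg hγ (Nat.cast_nonneg _)) (Nat.cast_nonneg _))
      (pnorm_nonneg hw)
  rcases Finset.eq_empty_or_nonempty T with hT | hTne
  · -- `T = ∅`: exact tower identity
    subst hT
    have hvanish : ∀ x : Fin d → Ω, w x ≠ 0 →
        projE w ∅ (projE w T' f) x - projE w (∅ ∩ T') f x = 0 := by
      intro x _
      rw [Finset.empty_inter, projE_empty hw1, projE_empty hw1, expect_proj hw, sub_self]
    rw [pnorm_zero_on_supp hq0 hvanish]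
    exact RHSnn
  · rcases (T ∩ T').eq_empty_or_nonempty with hint | ⟨i, hiint⟩
    · -- disjoint case
      rcases Finset.eq_empty_or_nonempty T' with hT' | hT'ne
      · -- `T' = ∅`
        subst hT'
        have hvanish : ∀ x : Fin d → Ω, w x ≠ 0 →
            projE w T (projE w ∅ f) x - projE w (T ∩ ∅) f x = 0 := by
          intro x hx
          have hconst : ∀ a b, w a ≠ 0 → w b ≠ 0 → projE w ∅ f a = projE w ∅ f b := by
            intro a b _ _; rw [projE_empty hw1, projE_empty hw1]
          rw [const_on_supp_projE hw hconst hx, Finset.inter_empty, sub_self]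
        rw [pnorm_zero_on_supp hq0 hvanish]
        exact RHSnn
      · -- both nonempty, disjoint: peel one coordinate `j` off `T`
        obtain ⟨j, hjT⟩ := hTne
        have hjT' : j ∉ T' := by
          intro h
          have hj : j ∈ T ∩ T' := Finset.mem_inter.2 ⟨hjT, h⟩
          rw [hint] at hj
          exact absurd hj (Finset.notMem_empty j)
        set T0 := T.erase j with hT0def
        have hTpos : 1 ≤ T.card := Finset.card_pos.2 ⟨j, hjT⟩
        have hT0c : T0.card = T.card - 1 := by
          rw [hT0def, Finset.card_erase_of_mem hjT]
        have hT0T : T0 ⊆ T := by rw [hT0def]; exact Finset.erase_subset j T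
        have hdisj : Disjoint T T' := Finset.disjoint_iff_inter_eq_empty.2 hint
        have hcardU : (T ∪ T').card = T.card + T'.card := Finset.card_union_of_disjoint hdisj
        have hTsd : T \ T0 = {j} := by
          ext t
          simp only [hT0def, Finset.mem_sdiff, Finset.mem_erase, Finset.mem_singleton, not_and]
          constructor
          · rintro ⟨htT, hnot⟩
            by_contra hne
            exact hnot hne htT
          · rintro rfl; exact ⟨hjT, fun hne _ => absurd rfl hne⟩
        set K1 : ℝ := γ * T'.card with hK1def
        have hK1nn : 0 ≤ K1 := mul_nonneg hγ (Nat.cast_nonneg _)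
        have hlink : ∀ z, w z ≠ 0 →
            pnorm (condMeasure w T0 z) q
              (fun x => projE w T (projE w T' f) x - projE w T0 (projE w T' f) x)
              ≤ K1 * pnorm (condMeasure w T0 z) q (projE w T' f) := by
          intro z hz
          set ν := condMeasure w T0 z with hνdef
          have hνnn : ∀ x, 0 ≤ ν x := cond_nonneg hw
          have hν1 : ∑ y, ν y = 1 := cond_sum_one' hw hz
          have hGoodν : Good ν q γ (n - T0.card) := good_cond hw hγ hq hGood T0 z
          have hcondpat : ∀ y : Fin d → Ω, ν y ≠ 0 → condMeasure w T0 y = ν := by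
            intro y hy
            rw [hνdef]
            exact cond_pattern (cond_supp hy).1
          have hproj_id : ∀ u, ν u ≠ 0 →
              projE ν T' (projE w T' f) u = projE w T' f u := by
            intro u hu
            exact projE_junta hνnn (fun a b hab => projE_pattern hab) hu
          have hKS := key_single hq hγ ν hνnn (Or.inl hν1) hGoodν T'.card T' j
            (projE w T' f) hjT' rfl (by
              rw [hcardU] at hcard
              omega)
          have hcongr : ∀ y, ν y ≠ 0 →
              projE w T (projE w T' f) y - projE w T0 (projE w T' f) y
              = projE ν {j} (projE ν T' (projE w T' f)) y - projE ν ∅ (projE w T' f) y := by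
            intro y hy
            have e1 : projE w T (projE w T' f) y = projE ν {j} (projE w T' f) y := by
              rw [projE_cond hw hT0T (f := projE w T' f) (x := y), hTsd, hcondpat y hy]
            have e2 : projE w T0 (projE w T' f) y = projE ν ∅ (projE w T' f) y := by
              rw [projE_cond hw (Finset.Subset.refl T0) (f := projE w T' f) (x := y),
                Finset.sdiff_self, hcondpat y hy]
            have e3 : projE ν {j} (projE w T' f) y
                = projE ν {j} (projE ν T' (projE w T' f)) y :=
              projE_congr (fun u hu => (hproj_id u hu).symm)
            rw [e1, e2, e3]
          calc pnorm ν q (fun x => projE w T (projE w T' f) x - projE w T0 (projE w T' f) x)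
              = pnorm ν q (fun x => projE ν {j} (projE ν T' (projE w T' f)) x
                  - projE ν ∅ (projE w T' f) x) := pnorm_congr hcongr
            _ ≤ γ * T'.card * pnorm ν q (projE w T' f) := hKS
        have htermone : pnorm w q
            (fun x => projE w T (projE w T' f) x - projE w T0 (projE w T' f) x)
            ≤ K1 * pnorm w q f := by
          calc pnorm w q (fun x => projE w T (projE w T' f) x - projE w T0 (projE w T' f) x)
              ≤ K1 * pnorm w q (projE w T' f) :=
                pnorm_links hw T0 (by positivity) hK1nn hlink
            _ ≤ K1 * pnorm w q f :=
                mul_le_mul_of_nonneg_left (pnorm_proj_le hw hq.le) hK1nn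
        have hT0int : T0 ∩ T' = ∅ := by
          have hsub : T0 ∩ T' ⊆ T ∩ T' :=
            Finset.inter_subset_inter hT0T (Finset.Subset.refl T')
          rw [hint] at hsub
          exact Finset.subset_empty.1 hsub
        have hm' : T0.card + T'.card < m := by omega
        have hcard2 : (T0 ∪ T').card ≤ n :=
          le_trans (Finset.card_le_card
            (Finset.union_subset_union hT0T (Finset.Subset.refl T'))) hcard
        have hterm2 := IH (T0.card + T'.card) hm' w hw (Or.inl hw1) n hGood T0 T' f rfl hcard2
        rw [hT0int] at hterm2
        rw [hint]
        have hsplit : (fun x => projE w T (projE w T' f) x - projE w ∅ f x)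
            = fun x => (projE w T (projE w T' f) x - projE w T0 (projE w T' f) x)
                + (projE w T0 (projE w T' f) x - projE w ∅ f x) := by
          funext x; ring
        rw [hsplit]
        have hTc : (T0.card : ℝ) = (T.card : ℝ) - 1 := by
          rw [hT0c, Nat.cast_sub hTpos, Nat.cast_one]
        calc pnorm w q (fun x => (projE w T (projE w T' f) x - projE w T0 (projE w T' f) x)
                + (projE w T0 (projE w T' f) x - projE w ∅ f x))
            ≤ pnorm w q (fun x => projE w T (projE w T' f) x - projE w T0 (projE w T' f) x)
              + pnorm w q (fun x => projE w T0 (projE w T' f) x - projE w ∅ f x) :=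
              pnorm_add_le hw hq.le
          _ ≤ K1 * pnorm w q f + γ * T0.card * T'.card * pnorm w q f :=
              add_le_add htermone hterm2
          _ = γ * T.card * T'.card * pnorm w q f := by
              rw [hK1def, hTc]; ring
    · -- `i ∈ T ∩ T'`: pass to the link at `i`
      have hiT : i ∈ T := (Finset.mem_inter.1 hiint).1
      have hiT' : i ∈ T' := (Finset.mem_inter.1 hiint).2
      set T1 := T.erase i with hT1def
      set T1' := T'.erase i with hT1'def
      have hiTT' : i ∈ T ∪ T' := Finset.mem_union_left T' hiT
      have hT1c : T1.card = T.card - 1 := by rw [hT1def, Finset.card_erase_of_mem hiT]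
      have hT1'c : T1'.card = T'.card - 1 := by rw [hT1'def, Finset.card_erase_of_mem hiT']
      have hTpos : 1 ≤ T.card := Finset.card_pos.2 ⟨i, hiT⟩
      have hT'pos : 1 ≤ T'.card := Finset.card_pos.2 ⟨i, hiT'⟩
      have hTsd : T \ {i} = T1 := by rw [hT1def, Finset.erase_eq]
      have hT'sd : T' \ {i} = T1' := by rw [hT1'def, Finset.erase_eq]
      have hIntsd : (T ∩ T') \ {i} = T1 ∩ T1' := by
        ext t
        simp only [Finset.mem_sdiff, Finset.mem_inter, Finset.mem_singleton, hT1def, hT1'def,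
          Finset.mem_erase]
        tauto
      have hUerase : T1 ∪ T1' = (T ∪ T').erase i := by
        ext t
        simp only [Finset.mem_union, hT1def, hT1'def, Finset.mem_erase]
        tauto
      set K2 : ℝ := γ * T1.card * T1'.card with hK2def
      have hK2nn : 0 ≤ K2 :=
        mul_nonneg (mul_nonneg hγ (Nat.cast_nonneg _)) (Nat.cast_nonneg _)
      have hising : {i} ⊆ T := Finset.singleton_subset_iff.2 hiT
      have hising' : {i} ⊆ T' := Finset.singleton_subset_iff.2 hiT'
      have hisingInt : {i} ⊆ T ∩ T' := Finset.singleton_subset_iff.2 hiint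
      have hlink : ∀ z, w z ≠ 0 →
          pnorm (condMeasure w {i} z) q
            (fun x => projE w T (projE w T' f) x - projE w (T ∩ T') f x)
            ≤ K2 * pnorm (condMeasure w {i} z) q f := by
        intro z hz
        set ν := condMeasure w {i} z with hνdef
        have hνnn : ∀ x, 0 ≤ ν x := cond_nonneg hw
        have hν1 : ∑ y, ν y = 1 := cond_sum_one' hw hz
        have hGoodν : Good ν q γ (n - 1) := by
          have hg := good_cond hw hγ hq hGood {i} z
          rwa [Finset.card_singleton] at hg
        have hcondpat : ∀ y : Fin d → Ω, ν y ≠ 0 → condMeasure w {i} y = ν := by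
          intro y hy
          rw [hνdef]
          exact cond_pattern (cond_supp hy).1
        have hm' : T1.card + T1'.card < m := by omega
        have hcard' : (T1 ∪ T1').card ≤ n - 1 := by
          rw [hUerase, Finset.card_erase_of_mem hiTT']
          omega
        have hIHν := IH (T1.card + T1'.card) hm' ν hνnn (Or.inl hν1) (n - 1) hGoodν
          T1 T1' f rfl hcard'
        have hinner : ∀ u, ν u ≠ 0 → projE w T' f u = projE ν T1' f u := by
          intro u hu
          rw [projE_cond hw hising' (f := f) (x := u), hT'sd, hcondpat u hu]
        have hcongr : ∀ y, ν y ≠ 0 →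
            projE w T (projE w T' f) y - projE w (T ∩ T') f y
            = projE ν T1 (projE ν T1' f) y - projE ν (T1 ∩ T1') f y := by
          intro y hy
          have e1 : projE w T (projE w T' f) y = projE ν T1 (projE w T' f) y := by
            rw [projE_cond hw hising (f := projE w T' f) (x := y), hTsd, hcondpat y hy]
          have e2 : projE ν T1 (projE w T' f) y = projE ν T1 (projE ν T1' f) y :=
            projE_congr hinner
          have e3 : projE w (T ∩ T') f y = projE ν (T1 ∩ T1') f y := by
            rw [projE_cond hw hisingInt (f := f) (x := y), hIntsd, hcondpat y hy]
          rw [e1, e2, e3]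
        calc pnorm ν q (fun x => projE w T (projE w T' f) x - projE w (T ∩ T') f x)
            = pnorm ν q (fun x => projE ν T1 (projE ν T1' f) x - projE ν (T1 ∩ T1') f x) :=
              pnorm_congr hcongr
          _ ≤ γ * T1.card * T1'.card * pnorm ν q f := hIHν
          _ = K2 * pnorm ν q f := by rw [hK2def]
      have hmain : pnorm w q (fun x => projE w T (projE w T' f) x - projE w (T ∩ T') f x)
          ≤ K2 * pnorm w q f := pnorm_links hw {i} (by positivity) hK2nn hlink
      refine le_trans hmain ?_
      have h1 : (T1.card : ℝ) ≤ T.card :=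
        Nat.cast_le.2 (Finset.card_le_card (Finset.erase_subset i T))
      have h1' : (T1'.card : ℝ) ≤ T'.card :=
        Nat.cast_le.2 (Finset.card_le_card (Finset.erase_subset i T'))
      have hp := pnorm_nonneg (w := w) (q := q) (F := f) hw
      rw [hK2def]
      apply mul_le_mul_of_nonneg_right _ hp
      exact mul_le_mul (mul_le_mul_of_nonneg_left h1 hγ) h1' (Nat.cast_nonneg _)
        (mul_nonneg hγ (Nat.cast_nonneg _))

end ESAux8

noncomputable section ESAux9
set_option linter.unusedSectionVars false

variable {d : ℕ} {Ω : Type} [Fintype Ω] [DecidableEq Ω]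
variable {w : (Fin d → Ω) → ℝ} {A : Finset (Fin d)}

lemma projE_finsum {ι : Type*} (s : Finset ι) (c : ι → ℝ) (g : ι → (Fin d → Ω) → ℝ)
    (x : Fin d → Ω) :
    projE w A (fun y => ∑ i ∈ s, c i * g i y) x = ∑ i ∈ s, c i * projE w A (g i) x := by
  rw [projE_def]
  have hnum : nume w A (fun y => ∑ i ∈ s, c i * g i y) x
      = ∑ i ∈ s, c i * nume w A (g i) x := by
    rw [nume]
    calc ∑ y, (if ∀ t ∈ A, y t = x t then w y * ∑ i ∈ s, c i * g i y else 0)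
        = ∑ y, ∑ i ∈ s, (if ∀ t ∈ A, y t = x t then c i * (w y * g i y) else 0) := by
          apply Finset.sum_congr rfl; intro y _
          by_cases hc : ∀ t ∈ A, y t = x t
          · simp only [eq_true hc, if_true]
            rw [Finset.mul_sum]
            apply Finset.sum_congr rfl; intro i _
            ring
          · simp only [eq_false hc, if_false, Finset.sum_const_zero]
      _ = ∑ i ∈ s, ∑ y, (if ∀ t ∈ A, y t = x t then c i * (w y * g i y) else 0) :=
          Finset.sum_comm
      _ = ∑ i ∈ s, c i * nume w A (g i) x := by
          apply Finset.sum_congr rfl; intro i _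
          rw [nume, Finset.mul_sum]
          apply Finset.sum_congr rfl; intro y _
          by_cases hc : ∀ t ∈ A, y t = x t
          · simp only [eq_true hc, if_true]
          · simp only [eq_false hc, if_false, mul_zero]
  rw [hnum, Finset.sum_div]
  apply Finset.sum_congr rfl; intro i _
  rw [projE_def, mul_div_assoc]

end ESAux9

/-- projections kill Efron–Stein components outside their
support: there is a universal constant `C` such that on any `(q,γ)`-product,
if `S ⊄ T` then `‖E_T f^{=S}‖_q ≤ |T| · 2^{C·|S|} · γ · ‖f‖_q`. -/
theorem proj_kills_es_component :
    ∃ C : ℝ, 0 < C ∧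
      ∀ (d : ℕ) (Ω : Type) [Fintype Ω] [DecidableEq Ω]
        (μ : (Fin d → Ω) → ℝ), (∀ x, 0 ≤ μ x) → (∑ x, μ x = 1) →
        ∀ q γ : ℝ, 1 < q → 0 ≤ γ → IsQGammaProduct μ q γ →
        ∀ (T S : Finset (Fin d)), ¬ S ⊆ T →
        ∀ f : (Fin d → Ω) → ℝ,
          pnorm μ q (projE μ T (esComp μ S f))
            ≤ (T.card : ℝ) * 2 ^ (C * S.card) * γ * pnorm μ q f := by
  refine ⟨2, by norm_num, ?_⟩
  intro d Ω _ _ μ hμ hμ1 q γ hq hγ hprod T S hST f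
  have hq0 : q ≠ 0 := by positivity
  have hGood : Good μ q γ d := hprod
  obtain ⟨s, hsS, hsT⟩ := Finset.not_subset.1 hST
  -- linearity
  have hEq1 : projE μ T (esComp μ S f)
      = fun x => ∑ T' ∈ S.powerset,
          ((-1 : ℝ) ^ (S.card - T'.card)) * projE μ T (projE μ T' f) x := by
    funext x
    exact projE_finsum S.powerset (fun T' => (-1 : ℝ) ^ (S.card - T'.card))
      (fun T' => projE μ T' f) x
  -- cancellation of the projected alternating sum
  have hzero : ∀ x : Fin d → Ω,
      ∑ T' ∈ S.powerset, ((-1 : ℝ) ^ (S.card - T'.card)) * projE μ (T ∩ T') f x = 0 := by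
    intro x
    apply Finset.sum_involution
      (g := fun T' _ => if s ∈ T' then T'.erase s else insert s T')
    · -- pairs cancel
      intro a ha
      have hsub : a ⊆ S := Finset.mem_powerset.1 ha
      by_cases hs' : s ∈ a
      · rw [if_pos hs']
        have hint2 : T ∩ a.erase s = T ∩ a := by
          ext t
          simp only [Finset.mem_inter, Finset.mem_erase]
          constructor
          · rintro ⟨h1, _, h3⟩; exact ⟨h1, h3⟩
          · rintro ⟨h1, h3⟩; exact ⟨h1, fun he => hsT (he ▸ h1), h3⟩
        have hc1 : 1 ≤ a.card := Finset.card_pos.2 ⟨s, hs'⟩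
        have hcS : a.card ≤ S.card := Finset.card_le_card hsub
        have hcexp : S.card - (a.erase s).card = (S.card - a.card) + 1 := by
          rw [Finset.card_erase_of_mem hs']
          omega
        rw [hint2, hcexp, pow_succ]
        ring
      · rw [if_neg hs']
        have hint2 : T ∩ insert s a = T ∩ a := by
          ext t
          simp only [Finset.mem_inter, Finset.mem_insert]
          constructor
          · rintro ⟨h1, h2 | h3⟩
            · exact absurd (h2 ▸ h1) hsT
            · exact ⟨h1, h3⟩
          · rintro ⟨h1, h3⟩; exact ⟨h1, Or.inr h3⟩
        have hcS : (insert s a).card ≤ S.card :=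
          Finset.card_le_card (Finset.insert_subset hsS hsub)
        have hcins : (insert s a).card = a.card + 1 := Finset.card_insert_of_notMem hs'
        have hcexp : S.card - a.card = (S.card - (insert s a).card) + 1 := by omega
        rw [hint2, hcexp, pow_succ]
        ring
    · intro a _ _
      by_cases hs' : s ∈ a
      · rw [if_pos hs']
        exact fun h => (Finset.erase_eq_self.1 h) hs'
      · rw [if_neg hs']
        exact fun h => hs' (Finset.insert_eq_self.1 h)
    · intro a _
      by_cases hs' : s ∈ a
      · rw [if_pos hs', if_neg (Finset.notMem_erase s a), Finset.insert_erase hs']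
      · rw [if_neg hs', if_pos (Finset.mem_insert_self s a), Finset.erase_insert hs']
    · intro a ha
      have hsub : a ⊆ S := Finset.mem_powerset.1 ha
      by_cases hs' : s ∈ a
      · rw [if_pos hs']
        exact Finset.mem_powerset.2 ((Finset.erase_subset s a).trans hsub)
      · rw [if_neg hs']
        exact Finset.mem_powerset.2 (Finset.insert_subset hsS hsub)
  -- rewrite into a sum of differences
  have hEq2 : (fun x => ∑ T' ∈ S.powerset,
        ((-1 : ℝ) ^ (S.card - T'.card)) * projE μ T (projE μ T' f) x)
      = fun x => ∑ T' ∈ S.powerset, ((-1 : ℝ) ^ (S.card - T'.card))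
          * (projE μ T (projE μ T' f) x - projE μ (T ∩ T') f x) := by
    funext x
    rw [eq_comm]
    calc ∑ T' ∈ S.powerset, ((-1 : ℝ) ^ (S.card - T'.card))
            * (projE μ T (projE μ T' f) x - projE μ (T ∩ T') f x)
        = (∑ T' ∈ S.powerset, ((-1 : ℝ) ^ (S.card - T'.card)) * projE μ T (projE μ T' f) x)
          - ∑ T' ∈ S.powerset, ((-1 : ℝ) ^ (S.card - T'.card)) * projE μ (T ∩ T') f x := by
          rw [← Finset.sum_sub_distrib]
          apply Finset.sum_congr rfl; intro T' _
          ring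
      _ = ∑ T' ∈ S.powerset, ((-1 : ℝ) ^ (S.card - T'.card)) * projE μ T (projE μ T' f) x := by
          rw [hzero x, sub_zero]
  have hcardd : ∀ T' : Finset (Fin d), (T ∪ T').card ≤ d := by
    intro T'
    have h1 := Finset.card_le_card (Finset.subset_univ (T ∪ T'))
    rwa [Finset.card_fin] at h1
  have hterm : ∀ T' ∈ S.powerset,
      pnorm μ q (fun x => ((-1 : ℝ) ^ (S.card - T'.card))
          * (projE μ T (projE μ T' f) x - projE μ (T ∩ T') f x))
        ≤ γ * T.card * S.card * pnorm μ q f := by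
    intro T' hT'
    have habs : |(-1 : ℝ) ^ (S.card - T'.card)| = 1 := by
      rw [abs_pow, abs_neg, abs_one, one_pow]
    rw [pnorm_smul hμ (by positivity), habs, one_mul]
    have hkg := key_general hq hγ (T.card + T'.card) μ hμ (Or.inl hμ1) d hGood T T' f rfl
      (hcardd T')
    refine le_trans hkg ?_
    have hc : (T'.card : ℝ) ≤ S.card :=
      Nat.cast_le.2 (Finset.card_le_card (Finset.mem_powerset.1 hT'))
    apply mul_le_mul_of_nonneg_right _ (pnorm_nonneg hμ)
    exact mul_le_mul_of_nonneg_left hc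
      (mul_nonneg hγ (Nat.cast_nonneg _))
  -- put everything together
  rw [hEq1, hEq2]
  set P : ℝ := (2 : ℝ) ^ (S.card : ℕ) with hPdef
  have hsP : (S.card : ℝ) ≤ P := by
    rw [hPdef]
    exact_mod_cast (Nat.lt_two_pow_self (n := S.card)).le
  have hPpos : (0 : ℝ) < P := by rw [hPdef]; positivity
  have h2s : (2 : ℝ) ^ ((2 : ℝ) * (S.card : ℝ)) = P * P := by
    rw [two_mul, Real.rpow_add (by norm_num), Real.rpow_natCast, hPdef]
  calc pnorm μ q (fun x => ∑ T' ∈ S.powerset, ((-1 : ℝ) ^ (S.card - T'.card))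
          * (projE μ T (projE μ T' f) x - projE μ (T ∩ T') f x))
      ≤ ∑ T' ∈ S.powerset, pnorm μ q (fun x => ((-1 : ℝ) ^ (S.card - T'.card))
          * (projE μ T (projE μ T' f) x - projE μ (T ∩ T') f x)) :=
        pnorm_sum_le S.powerset _ hμ hq.le
    _ ≤ ∑ _T' ∈ S.powerset, γ * T.card * S.card * pnorm μ q f :=
        Finset.sum_le_sum hterm
    _ = P * (γ * T.card * S.card * pnorm μ q f) := by
        rw [Finset.sum_const, Finset.card_powerset, nsmul_eq_mul, hPdef]
        push_cast
        ring
    _ = (γ * (T.card : ℝ) * pnorm μ q f) * (P * (S.card : ℝ)) := by ring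
    _ ≤ (γ * (T.card : ℝ) * pnorm μ q f) * (P * P) := by
        apply mul_le_mul_of_nonneg_left
          (mul_le_mul_of_nonneg_left hsP hPpos.le)
          (mul_nonneg (mul_nonneg hγ (Nat.cast_nonneg _)) (pnorm_nonneg hμ))
    _ = (T.card : ℝ) * 2 ^ ((2 : ℝ) * S.card) * γ * pnorm μ q f := by
        rw [h2s]; ring
end

section
/- Approximate eigenvector property: let X be a d-partite (q,γ)-product and M = ∑_{T⊆[d]} α_T E_T with α ∈ ℝ^{2^{[d]}}. Then for any f and S ⊆ [d], ‖M f^{=S} − λ_S f^{=S}‖_q ≤ |α|₁ · 2^{O(d)} γ ‖f‖_q, where λ_S = ∑_{T ⊇ S} α_T and |α|₁ = ∑_T |α_T|. -/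
open Finset BigOperators

namespace AEV
set_option linter.unusedSectionVars false

variable {d : ℕ} {Ω : Type} [Fintype Ω] [DecidableEq Ω]

/-- Denominator of `projE`. -/
noncomputable def Z (μ : (Fin d → Ω) → ℝ) (T : Finset (Fin d)) (x : Fin d → Ω) : ℝ :=
  ∑ y : Fin d → Ω, if ∀ i ∈ T, y i = x i then μ y else 0

/-- Numerator of `projE`. -/
noncomputable def Nv (μ : (Fin d → Ω) → ℝ) (T : Finset (Fin d))
    (f : (Fin d → Ω) → ℝ) (x : Fin d → Ω) : ℝ :=
  ∑ y : Fin d → Ω, if ∀ i ∈ T, y i = x i then μ y * f y else 0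

lemma projE_def (μ : (Fin d → Ω) → ℝ) (T : Finset (Fin d)) (f : (Fin d → Ω) → ℝ)
    (x : Fin d → Ω) : projE μ T f x = Nv μ T f x / Z μ T x := rfl

/-- `g` depends only on the coordinates in `T`. -/
def DepOn (T : Finset (Fin d)) (g : (Fin d → Ω) → ℝ) : Prop :=
  ∀ x y : Fin d → Ω, (∀ i ∈ T, x i = y i) → g x = g y

lemma DepOn.mono {T T' : Finset (Fin d)} {g : (Fin d → Ω) → ℝ}
    (h : DepOn T g) (hTT' : T ⊆ T') : DepOn T' g :=
  fun x y hxy => h x y fun i hi => hxy i (hTT' hi)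

variable {μ : (Fin d → Ω) → ℝ}

lemma Z_nonneg (hμ : ∀ x, 0 ≤ μ x) (T : Finset (Fin d)) (x : Fin d → Ω) :
    0 ≤ Z μ T x :=
  Finset.sum_nonneg fun y _ => by split_ifs; exacts [hμ y, le_rfl]

lemma le_Z (hμ : ∀ x, 0 ≤ μ x) (T : Finset (Fin d)) (x : Fin d → Ω) :
    μ x ≤ Z μ T x := by
  have : (if ∀ i ∈ T, x i = x i then μ x else 0) = μ x := by simp
  calc μ x = (if ∀ i ∈ T, x i = x i then μ x else 0) := this.symm
    _ ≤ Z μ T x := Finset.single_le_sum (f := fun y => if ∀ i ∈ T, y i = x i then μ y else 0)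
        (fun y _ => by
          show (0:ℝ) ≤ if ∀ i ∈ T, y i = x i then μ y else 0
          split_ifs; exacts [hμ y, le_rfl]) (Finset.mem_univ x)

lemma Z_pos (hμ : ∀ x, 0 ≤ μ x) {x : Fin d → Ω} (hx : 0 < μ x) (T : Finset (Fin d)) :
    0 < Z μ T x := lt_of_lt_of_le hx (le_Z hμ T x)

lemma Z_congr {T : Finset (Fin d)} {x x' : Fin d → Ω} (h : ∀ i ∈ T, x i = x' i) :
    Z μ T x = Z μ T x' := by
  refine Finset.sum_congr rfl fun y _ => ?_
  refine if_congr ⟨fun hy i hi => ?_, fun hy i hi => ?_⟩ rfl rfl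
  · rw [← h i hi]; exact hy i hi
  · rw [h i hi]; exact hy i hi

lemma Nv_congr {T : Finset (Fin d)} {f : (Fin d → Ω) → ℝ} {x x' : Fin d → Ω}
    (h : ∀ i ∈ T, x i = x' i) : Nv μ T f x = Nv μ T f x' := by
  refine Finset.sum_congr rfl fun y _ => ?_
  refine if_congr ⟨fun hy i hi => ?_, fun hy i hi => ?_⟩ rfl rfl
  · rw [← h i hi]; exact hy i hi
  · rw [h i hi]; exact hy i hi

lemma projE_depOn (μ : (Fin d → Ω) → ℝ) (T : Finset (Fin d)) (f : (Fin d → Ω) → ℝ) :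
    DepOn T (projE μ T f) := by
  intro x y hxy
  rw [projE_def, projE_def, Nv_congr hxy, Z_congr hxy]

lemma projE_self (hμ : ∀ x, 0 ≤ μ x) {T : Finset (Fin d)} {g : (Fin d → Ω) → ℝ}
    (hg : DepOn T g) {x : Fin d → Ω} (hx : 0 < μ x) : projE μ T g x = g x := by
  have hNv : Nv μ T g x = Z μ T x * g x := by
    rw [Nv, Z, Finset.sum_mul]
    refine Finset.sum_congr rfl fun y _ => ?_
    by_cases h : ∀ i ∈ T, y i = x i
    · rw [if_pos h, if_pos h, hg y x h]
    · rw [if_neg h, if_neg h, zero_mul]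
  rw [projE_def, hNv, mul_comm, mul_div_assoc, div_self (Z_pos hμ hx T).ne', mul_one]

lemma projE_sub (μ : (Fin d → Ω) → ℝ) (T : Finset (Fin d)) (f g : (Fin d → Ω) → ℝ)
    (x : Fin d → Ω) :
    projE μ T (fun y => f y - g y) x = projE μ T f x - projE μ T g x := by
  rw [projE_def, projE_def, projE_def, ← sub_div]
  congr 1
  rw [Nv, Nv, Nv, ← Finset.sum_sub_distrib]
  refine Finset.sum_congr rfl fun y _ => ?_
  split_ifs
  · ring
  · ring

lemma projE_sum (μ : (Fin d → Ω) → ℝ) (T : Finset (Fin d)) {ι : Type*} (s : Finset ι)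
    (F : ι → (Fin d → Ω) → ℝ) (x : Fin d → Ω) :
    projE μ T (fun y => ∑ u ∈ s, F u y) x = ∑ u ∈ s, projE μ T (F u) x := by
  simp only [projE_def]
  rw [← Finset.sum_div]
  congr 1
  rw [Nv]
  have : ∀ y : Fin d → Ω,
      (if ∀ i ∈ T, y i = x i then μ y * ∑ u ∈ s, F u y else 0)
        = ∑ u ∈ s, (if ∀ i ∈ T, y i = x i then μ y * F u y else 0) := by
    intro y
    split_ifs with h
    · rw [Finset.mul_sum]
    · rw [Finset.sum_const_zero]
  rw [Finset.sum_congr rfl fun y _ => this y, Finset.sum_comm]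
  rfl

lemma projE_smul (μ : (Fin d → Ω) → ℝ) (T : Finset (Fin d)) (c : ℝ)
    (f : (Fin d → Ω) → ℝ) (x : Fin d → Ω) :
    projE μ T (fun y => c * f y) x = c * projE μ T f x := by
  have hNv : Nv μ T (fun y => c * f y) x = c * Nv μ T f x := by
    rw [Nv, Nv, Finset.mul_sum]
    refine Finset.sum_congr rfl fun y _ => ?_
    split_ifs
    · ring
    · ring
  rw [projE_def, projE_def, hNv, mul_div_assoc]

lemma projE_apply (μ : (Fin d → Ω) → ℝ) (T : Finset (Fin d)) (h : (Fin d → Ω) → ℝ)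
    (x : Fin d → Ω) :
    projE μ T h x
      = ∑ y, ((if ∀ i ∈ T, y i = x i then μ y else 0) / Z μ T x) * h y := by
  rw [projE_def, Nv, Finset.sum_div]
  refine Finset.sum_congr rfl fun y _ => ?_
  split_ifs
  · rw [div_mul_eq_mul_div]
  · simp

lemma Nv_tower (hμ : ∀ y, 0 ≤ μ y) {A B : Finset (Fin d)} (hAB : A ⊆ B)
    (f : (Fin d → Ω) → ℝ) (x : Fin d → Ω) :
    Nv μ A (fun y => projE μ B f y) x = Nv μ A f x := by
  have step1 : ∀ y : Fin d → Ω,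
      (if ∀ i ∈ A, y i = x i then μ y * projE μ B f y else 0)
        = ∑ w : Fin d → Ω, (if (∀ i ∈ A, y i = x i) ∧ (∀ i ∈ B, w i = y i)
            then μ y * (μ w * f w) / Z μ B w else 0) := by
    intro y
    by_cases hA : ∀ i ∈ A, y i = x i
    · rw [if_pos hA]
      have e1 : ∀ w : Fin d → Ω,
          (if (∀ i ∈ A, y i = x i) ∧ (∀ i ∈ B, w i = y i)
              then μ y * (μ w * f w) / Z μ B w else 0)
            = μ y * ((if ∀ i ∈ B, w i = y i then μ w * f w else 0) / Z μ B y) := by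
        intro w
        by_cases hB : ∀ i ∈ B, w i = y i
        · rw [if_pos ⟨hA, hB⟩, if_pos hB, Z_congr hB, mul_div_assoc]
        · rw [if_neg (fun hc => hB hc.2), if_neg hB]
          simp
      rw [Finset.sum_congr rfl fun w _ => e1 w, ← Finset.mul_sum, ← Finset.sum_div]
      rfl
    · rw [if_neg hA]
      symm
      refine Finset.sum_eq_zero fun w _ => ?_
      exact if_neg (fun hc => hA hc.1)
  rw [Nv, Finset.sum_congr rfl fun y _ => step1 y, Finset.sum_comm]
  refine Finset.sum_congr rfl fun w _ => ?_
  by_cases hw : ∀ i ∈ A, w i = x i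
  · have hcond : ∀ y : Fin d → Ω,
        ((∀ i ∈ A, y i = x i) ∧ (∀ i ∈ B, w i = y i)) ↔ (∀ i ∈ B, w i = y i) := by
      intro y
      constructor
      · exact fun hc => hc.2
      · exact fun hB => ⟨fun i hi => by rw [← hB i (hAB hi)]; exact hw i hi, hB⟩
    have e2 : ∑ y : Fin d → Ω, (if (∀ i ∈ A, y i = x i) ∧ (∀ i ∈ B, w i = y i)
        then μ y * (μ w * f w) / Z μ B w else 0)
        = ∑ y : Fin d → Ω,
            (if ∀ i ∈ B, w i = y i then μ y else 0) * (μ w * f w / Z μ B w) := by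
      refine Finset.sum_congr rfl fun y _ => ?_
      rw [if_congr (hcond y) rfl rfl]
      split_ifs
      · ring
      · rw [zero_mul]
    have hZ : (∑ y : Fin d → Ω, if ∀ i ∈ B, w i = y i then μ y else 0) = Z μ B w := by
      refine Finset.sum_congr rfl fun y _ => ?_
      exact if_congr ⟨fun hc i hi => (hc i hi).symm, fun hc i hi => (hc i hi).symm⟩ rfl rfl
    rw [e2, ← Finset.sum_mul, hZ, if_pos hw]
    by_cases hZ0 : Z μ B w = 0
    · have hμw : μ w = 0 := le_antisymm (hZ0 ▸ le_Z hμ B w) (hμ w)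
      rw [hZ0, hμw]
      simp
    · rw [mul_comm, div_mul_cancel₀ _ hZ0]
  · rw [if_neg hw]
    refine Finset.sum_eq_zero fun y _ => ?_
    refine if_neg fun hc => hw fun i hi => ?_
    rw [hc.2 i (hAB hi)]
    exact hc.1 i hi

lemma tower (hμ : ∀ y, 0 ≤ μ y) {A B : Finset (Fin d)} (hAB : A ⊆ B)
    (f : (Fin d → Ω) → ℝ) (x : Fin d → Ω) :
    projE μ A (projE μ B f) x = projE μ A f x := by
  rw [projE_def, projE_def, ← Nv_tower hμ hAB f x]

lemma Nv_empty (g : (Fin d → Ω) → ℝ) (x : Fin d → Ω) :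
    Nv μ ∅ g x = ∑ y, μ y * g y :=
  Finset.sum_congr rfl fun y _ =>
    if_pos (fun i hi => absurd hi (Finset.notMem_empty i))

lemma expect_projE (hμ : ∀ y, 0 ≤ μ y) (hμ1 : ∑ x, μ x = 1)
    (T : Finset (Fin d)) (h : (Fin d → Ω) → ℝ) :
    ∑ x, μ x * projE μ T h x = ∑ x, μ x * h x := by
  have hne : Nonempty (Fin d → Ω) := by
    by_contra hc
    rw [not_nonempty_iff] at hc
    rw [Finset.univ_eq_empty, Finset.sum_empty] at hμ1
    exact one_ne_zero hμ1.symm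
  obtain ⟨x0⟩ := hne
  have h2 := Nv_tower hμ (Finset.empty_subset T) h x0
  rwa [Nv_empty, Nv_empty] at h2

lemma jensen_pt (hμ : ∀ y, 0 ≤ μ y) {q : ℝ} (hq : 1 ≤ q) (T : Finset (Fin d))
    (g : (Fin d → Ω) → ℝ) (x : Fin d → Ω) :
    |projE μ T g x| ^ q ≤ projE μ T (fun y => |g y| ^ q) x := by
  have hq0 : q ≠ 0 := (lt_of_lt_of_le one_pos hq).ne'
  by_cases hZ : Z μ T x = 0
  · rw [projE_def, projE_def, hZ, div_zero, div_zero, abs_zero, Real.zero_rpow hq0]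
  · have hZpos : 0 < Z μ T x := lt_of_le_of_ne (Z_nonneg hμ T x) (Ne.symm hZ)
    have hwnn : ∀ y : Fin d → Ω,
        0 ≤ (if ∀ i ∈ T, y i = x i then μ y else 0) / Z μ T x :=
      fun y => div_nonneg (by split_ifs; exacts [hμ y, le_rfl]) hZpos.le
    have hw1 : ∑ y : Fin d → Ω,
        (if ∀ i ∈ T, y i = x i then μ y else 0) / Z μ T x = 1 := by
      rw [← Finset.sum_div]
      exact div_self hZ
    have h1 : |projE μ T g x|
        ≤ ∑ y : Fin d → Ω,
            ((if ∀ i ∈ T, y i = x i then μ y else 0) / Z μ T x) * |g y| := by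
      rw [projE_apply]
      refine (Finset.abs_sum_le_sum_abs _ _).trans ?_
      refine Finset.sum_le_sum fun y _ => ?_
      rw [abs_mul, abs_of_nonneg (hwnn y)]
    calc |projE μ T g x| ^ q
        ≤ (∑ y : Fin d → Ω,
            ((if ∀ i ∈ T, y i = x i then μ y else 0) / Z μ T x) * |g y|) ^ q :=
          Real.rpow_le_rpow (abs_nonneg _) h1 (le_trans zero_le_one hq)
      _ ≤ ∑ y : Fin d → Ω,
            ((if ∀ i ∈ T, y i = x i then μ y else 0) / Z μ T x) * |g y| ^ q :=
          Real.rpow_arith_mean_le_arith_mean_rpow Finset.univ _ (fun y => |g y|)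
            (fun y _ => hwnn y) hw1 (fun y _ => abs_nonneg _) hq
      _ = projE μ T (fun y => |g y| ^ q) x := (projE_apply μ T _ x).symm

lemma pnorm_nonneg (hμ : ∀ x, 0 ≤ μ x) (q : ℝ) (f : (Fin d → Ω) → ℝ) :
    0 ≤ pnorm μ q f :=
  Real.rpow_nonneg (Finset.sum_nonneg fun x _ =>
    mul_nonneg (hμ x) (Real.rpow_nonneg (abs_nonneg _) _)) _

lemma pnorm_congr {q : ℝ} {f g : (Fin d → Ω) → ℝ}
    (h : ∀ x, μ x ≠ 0 → f x = g x) : pnorm μ q f = pnorm μ q g := by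
  unfold pnorm
  congr 1
  refine Finset.sum_congr rfl fun x _ => ?_
  by_cases hx : μ x = 0
  · rw [hx, zero_mul, zero_mul]
  · rw [h x hx]

lemma pnorm_zero {q : ℝ} (hq : q ≠ 0) : pnorm μ q (fun _ => 0) = 0 := by
  unfold pnorm
  rw [show (∑ x : Fin d → Ω, μ x * |(0:ℝ)| ^ q) = 0 from Finset.sum_eq_zero fun x _ => by
    rw [abs_zero, Real.zero_rpow hq, mul_zero], Real.zero_rpow (one_div_ne_zero hq)]

lemma pnorm_zero' {q : ℝ} (hq : q ≠ 0) {f : (Fin d → Ω) → ℝ}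
    (h : ∀ x, μ x ≠ 0 → f x = 0) : pnorm μ q f = 0 := by
  rw [pnorm_congr h]
  exact pnorm_zero hq

lemma pnorm_smul (hμ : ∀ x, 0 ≤ μ x) {q : ℝ} (hq : 0 < q) (c : ℝ)
    (f : (Fin d → Ω) → ℝ) :
    pnorm μ q (fun x => c * f x) = |c| * pnorm μ q f := by
  unfold pnorm
  have e1 : ∀ x : Fin d → Ω, μ x * |c * f x| ^ q = |c| ^ q * (μ x * |f x| ^ q) := by
    intro x
    rw [abs_mul, Real.mul_rpow (abs_nonneg _) (abs_nonneg _)]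
    ring
  rw [Finset.sum_congr rfl fun x _ => e1 x, ← Finset.mul_sum,
    Real.mul_rpow (Real.rpow_nonneg (abs_nonneg _) _)
      (Finset.sum_nonneg fun x _ => mul_nonneg (hμ x) (Real.rpow_nonneg (abs_nonneg _) _)),
    ← Real.rpow_mul (abs_nonneg c), mul_one_div_cancel hq.ne', Real.rpow_one]

lemma pnorm_add_le (hμ : ∀ x, 0 ≤ μ x) {q : ℝ} (hq : 1 ≤ q)
    (f g : (Fin d → Ω) → ℝ) :
    pnorm μ q (fun x => f x + g x) ≤ pnorm μ q f + pnorm μ q g := by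
  have hq0 : (0:ℝ) < q := lt_of_lt_of_le one_pos hq
  have key : ∀ h : (Fin d → Ω) → ℝ,
      pnorm μ q h = (∑ x, |(μ x) ^ (1/q) * h x| ^ q) ^ (1/q) := by
    intro h
    unfold pnorm
    congr 1
    refine Finset.sum_congr rfl fun x _ => ?_
    rw [abs_mul, Real.mul_rpow (abs_nonneg _) (abs_nonneg _),
      abs_of_nonneg (Real.rpow_nonneg (hμ x) _), ← Real.rpow_mul (hμ x),
      one_div_mul_cancel hq0.ne', Real.rpow_one]
  rw [key, key, key]
  have e2 : ∀ x : Fin d → Ω,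
      (μ x) ^ (1/q) * (f x + g x) = (μ x) ^ (1/q) * f x + (μ x) ^ (1/q) * g x :=
    fun x => mul_add _ _ _
  calc (∑ x, |(μ x) ^ (1/q) * (f x + g x)| ^ q) ^ (1/q)
      = (∑ x, |(fun y => (μ y) ^ (1/q) * f y) x + (fun y => (μ y) ^ (1/q) * g y) x| ^ q) ^ (1/q) := by
        congr 1
        exact Finset.sum_congr rfl fun x _ => by rw [e2 x]
    _ ≤ _ := Real.Lp_add_le Finset.univ _ _ hq

lemma pnorm_neg {q : ℝ} (f : (Fin d → Ω) → ℝ) :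
    pnorm μ q (fun x => -f x) = pnorm μ q f := by
  unfold pnorm
  have e : ∀ x : Fin d → Ω, μ x * |-f x| ^ q = μ x * |f x| ^ q := fun x => by rw [abs_neg]
  rw [Finset.sum_congr rfl fun x _ => e x]

lemma pnorm_sub_le (hμ : ∀ x, 0 ≤ μ x) {q : ℝ} (hq : 1 ≤ q)
    (f g : (Fin d → Ω) → ℝ) :
    pnorm μ q (fun x => f x - g x) ≤ pnorm μ q f + pnorm μ q g := by
  have h1 : pnorm μ q (fun x => f x - g x) = pnorm μ q (fun x => f x + -(g x)) := by
    simp only [sub_eq_add_neg]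
  rw [h1, ← pnorm_neg (μ := μ) (q := q) g]
  exact pnorm_add_le hμ hq f _

lemma pnorm_sum_le (hμ : ∀ x, 0 ≤ μ x) {q : ℝ} (hq : 1 ≤ q) {ι : Type*}
    (s : Finset ι) (F : ι → (Fin d → Ω) → ℝ) :
    pnorm μ q (fun x => ∑ u ∈ s, F u x) ≤ ∑ u ∈ s, pnorm μ q (F u) := by
  classical
  have hq0 : q ≠ 0 := (lt_of_lt_of_le one_pos hq).ne'
  induction s using Finset.induction_on with
  | empty => simp [pnorm_zero (μ := μ) hq0]
  | insert a s' hu ih =>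
      have e1 : pnorm μ q (fun x => ∑ u ∈ insert a s', F u x)
          = pnorm μ q (fun x => F a x + ∑ u ∈ s', F u x) := by
        congr 1
        funext x
        rw [Finset.sum_insert hu]
      rw [e1, Finset.sum_insert hu]
      exact le_trans (pnorm_add_le hμ hq _ _) (by gcongr)

lemma pnorm_projE_le (hμ : ∀ y, 0 ≤ μ y) (hμ1 : ∑ x, μ x = 1) {q : ℝ} (hq : 1 ≤ q)
    (T : Finset (Fin d)) (g : (Fin d → Ω) → ℝ) :
    pnorm μ q (projE μ T g) ≤ pnorm μ q g := by
  unfold pnorm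
  refine Real.rpow_le_rpow
    (Finset.sum_nonneg fun x _ =>
      mul_nonneg (hμ x) (Real.rpow_nonneg (abs_nonneg _) _)) ?_
    (by positivity)
  calc ∑ x, μ x * |projE μ T g x| ^ q
      ≤ ∑ x, μ x * projE μ T (fun y => |g y| ^ q) x :=
        Finset.sum_le_sum fun x _ =>
          mul_le_mul_of_nonneg_left (jensen_pt hμ hq T g x) (hμ x)
    _ = ∑ x, μ x * |g x| ^ q := expect_projE hμ hμ1 T _

lemma condMeasure_def (μ : (Fin d → Ω) → ℝ) (R : Finset (Fin d)) (z y : Fin d → Ω) :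
    condMeasure μ R z y = (if ∀ i ∈ R, y i = z i then μ y else 0) / Z μ R z := rfl

lemma condMeasure_nonneg (hμ : ∀ x, 0 ≤ μ x) (R : Finset (Fin d)) (z : Fin d → Ω)
    (y : Fin d → Ω) : 0 ≤ condMeasure μ R z y :=
  div_nonneg (by split_ifs; exacts [hμ y, le_rfl]) (Z_nonneg hμ R z)

lemma expect_cond (μ : (Fin d → Ω) → ℝ) (R : Finset (Fin d)) (z : Fin d → Ω)
    (F : (Fin d → Ω) → ℝ) : expect (condMeasure μ R z) F = projE μ R F z := by
  rw [projE_apply]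
  rfl

lemma pnorm_rpow_q {α : Type} [Fintype α] {ν : α → ℝ} (hν : ∀ x, 0 ≤ ν x) {q : ℝ}
    (hq0 : 0 < q) (Φ : α → ℝ) :
    pnorm ν q Φ ^ q = ∑ x, ν x * |Φ x| ^ q := by
  unfold pnorm
  rw [← Real.rpow_mul (Finset.sum_nonneg fun x _ =>
      mul_nonneg (hν x) (Real.rpow_nonneg (abs_nonneg _) _)),
    one_div_mul_cancel hq0.ne', Real.rpow_one]

lemma projE_cond (hμ : ∀ y, 0 ≤ μ y) {R : Finset (Fin d)} {i : Fin d} (hiR : i ∉ R)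
    {z x : Fin d → Ω} (hz : 0 < Z μ R z) (hxz : ∀ k ∈ R, x k = z k)
    {g' g : (Fin d → Ω) → ℝ} (hg' : ∀ y, (∀ k ∈ R, y k = z k) → g' y = g y) :
    projE (condMeasure μ R z) {i} g' x = projE μ (insert i R) g x := by
  have hcond : ∀ y : Fin d → Ω,
      (∀ k ∈ insert i R, y k = x k) ↔ (y i = x i ∧ ∀ k ∈ R, y k = z k) := by
    intro y
    rw [Finset.forall_mem_insert]
    constructor
    · exact fun hc => ⟨hc.1, fun k hk => (hc.2 k hk).trans (hxz k hk)⟩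
    · exact fun hc => ⟨hc.1, fun k hk => (hc.2 k hk).trans (hxz k hk).symm⟩
  have hsing : ∀ y : Fin d → Ω, (∀ k ∈ ({i} : Finset (Fin d)), y k = x k) ↔ y i = x i := by
    intro y
    simp
  have hnum : Nv (condMeasure μ R z) {i} g' x = Nv μ (insert i R) g x / Z μ R z := by
    rw [Nv, Nv, Finset.sum_div]
    refine Finset.sum_congr rfl fun y _ => ?_
    by_cases h1 : y i = x i
    · by_cases h2 : ∀ k ∈ R, y k = z k
      · rw [if_pos ((hsing y).mpr h1), if_pos ((hcond y).mpr ⟨h1, h2⟩),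
          condMeasure_def, if_pos h2, hg' y h2, div_mul_eq_mul_div]
      · rw [if_pos ((hsing y).mpr h1), if_neg (fun hc => h2 ((hcond y).mp hc).2),
          condMeasure_def, if_neg h2]
        simp
    · rw [if_neg (fun hc => h1 ((hsing y).mp hc)),
        if_neg (fun hc => h1 ((hcond y).mp hc).1), zero_div]
  have hden : Z (condMeasure μ R z) {i} x = Z μ (insert i R) x / Z μ R z := by
    rw [Z, Z, Finset.sum_div]
    refine Finset.sum_congr rfl fun y _ => ?_
    by_cases h1 : y i = x i
    · by_cases h2 : ∀ k ∈ R, y k = z k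
      · rw [if_pos ((hsing y).mpr h1), if_pos ((hcond y).mpr ⟨h1, h2⟩),
          condMeasure_def, if_pos h2]
      · rw [if_pos ((hsing y).mpr h1), if_neg (fun hc => h2 ((hcond y).mp hc).2),
          condMeasure_def, if_neg h2, zero_div]
    · rw [if_neg (fun hc => h1 ((hsing y).mp hc)),
        if_neg (fun hc => h1 ((hcond y).mp hc).1), zero_div]
  rw [projE_def, projE_def, hnum, hden, div_div_div_comm, div_self hz.ne', div_one]

lemma condMeasure_ne_zero {R : Finset (Fin d)} {z y : Fin d → Ω}
    (h : condMeasure μ R z y ≠ 0) : (∀ k ∈ R, y k = z k) ∧ μ y ≠ 0 := by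
  by_cases hc : ∀ k ∈ R, y k = z k
  · refine ⟨hc, fun h0 => h ?_⟩
    rw [condMeasure_def, if_pos hc, h0, zero_div]
  · exact absurd (by rw [condMeasure_def, if_neg hc, zero_div]) h

lemma link_pt (hμ0 : ∀ x, 0 ≤ μ x) {q γ : ℝ} (hq0 : 0 < q) (hγ : 0 ≤ γ)
    {R : Finset (Fin d)} {z : Fin d → Ω} {F G Φ g'' : (Fin d → Ω) → ℝ}
    (hFΦ : ∀ x, (∀ k ∈ R, x k = z k) → μ x ≠ 0 → F x = |Φ x| ^ q)
    (hGg : ∀ x, (∀ k ∈ R, x k = z k) → μ x ≠ 0 → G x = |g'' x| ^ q)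
    (hpn : pnorm (condMeasure μ R z) q Φ ≤ γ * pnorm (condMeasure μ R z) q g'') :
    projE μ R F z ≤ γ ^ q * projE μ R G z := by
  have e1 : projE μ R F z = ∑ x, condMeasure μ R z x * F x := by
    rw [← expect_cond]
    rfl
  have e2 : projE μ R G z = ∑ x, condMeasure μ R z x * G x := by
    rw [← expect_cond]
    rfl
  have e3 : ∑ x, condMeasure μ R z x * F x
      = ∑ x, condMeasure μ R z x * |Φ x| ^ q := by
    refine Finset.sum_congr rfl fun x _ => ?_
    by_cases hx : condMeasure μ R z x = 0
    · rw [hx, zero_mul, zero_mul]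
    · obtain ⟨hc, hμx⟩ := condMeasure_ne_zero hx
      rw [hFΦ x hc hμx]
  have e4 : ∑ x, condMeasure μ R z x * G x
      = ∑ x, condMeasure μ R z x * |g'' x| ^ q := by
    refine Finset.sum_congr rfl fun x _ => ?_
    by_cases hx : condMeasure μ R z x = 0
    · rw [hx, zero_mul, zero_mul]
    · obtain ⟨hc, hμx⟩ := condMeasure_ne_zero hx
      rw [hGg x hc hμx]
  rw [e1, e2, e3, e4, ← pnorm_rpow_q (condMeasure_nonneg hμ0 R z) hq0,
    ← pnorm_rpow_q (condMeasure_nonneg hμ0 R z) hq0]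
  calc pnorm (condMeasure μ R z) q Φ ^ q
      ≤ (γ * pnorm (condMeasure μ R z) q g'') ^ q :=
        Real.rpow_le_rpow (pnorm_nonneg (condMeasure_nonneg hμ0 R z) q Φ) hpn hq0.le
    _ = γ ^ q * pnorm (condMeasure μ R z) q g'' ^ q :=
        Real.mul_rpow hγ (pnorm_nonneg (condMeasure_nonneg hμ0 R z) q g'')

lemma link_step (hμ0 : ∀ x, 0 ≤ μ x) (hμ1 : ∑ x, μ x = 1) {q γ : ℝ}
    (hq : 1 < q) (hγ : 0 ≤ γ) (hX : IsQGammaProduct μ q γ)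
    {U W : Finset (Fin d)} {i j : Fin d} (hUW : U ⊆ W) (hiW : i ∈ W) (hiU : i ∉ U)
    (hjW : j ∉ W) {g : (Fin d → Ω) → ℝ} (hg : DepOn (insert j U) g) :
    pnorm μ q (fun x => projE μ W g x - projE μ (W.erase i) g x) ≤ γ * pnorm μ q g := by
  have hq0 : (0:ℝ) < q := lt_trans one_pos hq
  set R := W.erase i with hRdef
  have hiR : i ∉ R := Finset.notMem_erase i W
  have hjR : j ∉ R := fun h => hjW (Finset.erase_subset i W h)
  have hUR : U ⊆ R := Finset.subset_erase.mpr ⟨hUW, hiU⟩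
  have hins : insert i R = W := Finset.insert_erase hiW
  have hji : j ≠ i := fun h => hjW (h ▸ hiW)
  have hcard : R.card + 2 ≤ d := by
    have h1 : (insert j W).card ≤ d := by
      simpa using Finset.card_le_univ (insert j W)
    have h2 : (insert j W).card = W.card + 1 := Finset.card_insert_of_notMem hjW
    have h3 : R.card = W.card - 1 := Finset.card_erase_of_mem hiW
    have h4 : 1 ≤ W.card := Finset.card_pos.mpr ⟨i, hiW⟩
    omega
  have hg'link : ∀ z y : Fin d → Ω, (∀ k ∈ R, y k = z k) →
      g (fun k => if k ∈ R then z k else y k) = g y := by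
    intro z y hy
    refine hg _ _ fun k hk => ?_
    rcases Finset.mem_insert.mp hk with hk | hk
    · subst hk
      rw [if_neg hjR]
    · rw [if_pos (hUR hk)]
      exact (hy k (hUR hk)).symm
  have key : ∀ z : Fin d → Ω, 0 < μ z →
      projE μ R (fun x => |projE μ W g x - projE μ R g x| ^ q) z
        ≤ γ ^ q * projE μ R (fun x => |g x| ^ q) z := by
    intro z hz
    have hZR : 0 < Z μ R z := Z_pos hμ0 hz R
    have hg'dep : ∀ x y : Fin d → Ω, x j = y j →
        g (fun k => if k ∈ R then z k else x k)
          = g (fun k => if k ∈ R then z k else y k) := by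
      intro x y hxy
      refine hg _ _ fun k hk => ?_
      rcases Finset.mem_insert.mp hk with hk | hk
      · subst hk
        rw [if_neg hjR, if_neg hjR]
        exact hxy
      · rw [if_pos (hUR hk), if_pos (hUR hk)]
    have hyp := hX R z hcard j i hjR hiR hji
      (fun y => g (fun k => if k ∈ R then z k else y k)) hg'dep
    have hexp : expect (condMeasure μ R z)
        (fun y => g (fun k => if k ∈ R then z k else y k)) = projE μ R g z := by
      rw [expect_cond, projE_def, projE_def]
      congr 1
      refine Finset.sum_congr rfl fun y _ => ?_
      by_cases hc : ∀ k ∈ R, y k = z k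
      · rw [if_pos hc, if_pos hc]
        dsimp only
        rw [hg'link z y hc]
      · rw [if_neg hc, if_neg hc]
    refine link_pt hμ0 hq0 hγ (fun x hxc hμx => ?_) (fun x hxc hμx => ?_) hyp
    · have hid1 : projE (condMeasure μ R z) {i}
          (fun y => g (fun k => if k ∈ R then z k else y k)) x
            - expect (condMeasure μ R z)
                (fun y => g (fun k => if k ∈ R then z k else y k))
          = projE μ W g x - projE μ R g x := by
        rw [hexp, projE_cond hμ0 hiR hZR hxc (hg'link z), hins,
          projE_depOn μ R g z x (fun k hk => (hxc k hk).symm)]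
      rw [← hid1]
    · rw [hg'link z x hxc]
  have main : ∑ x, μ x * |projE μ W g x - projE μ R g x| ^ q
      ≤ γ ^ q * ∑ x, μ x * |g x| ^ q := by
    rw [← expect_projE hμ0 hμ1 R (fun x => |projE μ W g x - projE μ R g x| ^ q),
      ← expect_projE hμ0 hμ1 R (fun x => |g x| ^ q), Finset.mul_sum]
    refine Finset.sum_le_sum fun z _ => ?_
    by_cases hz : μ z = 0
    · rw [hz, zero_mul, zero_mul, mul_zero]
    · have hz' : 0 < μ z := lt_of_le_of_ne (hμ0 z) (Ne.symm hz)
      calc μ z * projE μ R (fun x => |projE μ W g x - projE μ R g x| ^ q) z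
          ≤ μ z * (γ ^ q * projE μ R (fun x => |g x| ^ q) z) :=
            mul_le_mul_of_nonneg_left (key z hz') (hμ0 z)
        _ = γ ^ q * (μ z * projE μ R (fun x => |g x| ^ q) z) := by ring
  have hsum_nonneg : (0:ℝ) ≤ ∑ x, μ x * |g x| ^ q :=
    Finset.sum_nonneg fun x _ => mul_nonneg (hμ0 x) (Real.rpow_nonneg (abs_nonneg _) _)
  unfold pnorm
  calc (∑ x, μ x * |projE μ W g x - projE μ R g x| ^ q) ^ (1/q)
      ≤ (γ ^ q * ∑ x, μ x * |g x| ^ q) ^ (1/q) :=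
        Real.rpow_le_rpow (Finset.sum_nonneg fun x _ =>
          mul_nonneg (hμ0 x) (Real.rpow_nonneg (abs_nonneg _) _)) main (by positivity)
    _ = γ * (∑ x, μ x * |g x| ^ q) ^ (1/q) := by
        rw [Real.mul_rpow (Real.rpow_nonneg hγ q) hsum_nonneg, ← Real.rpow_mul hγ,
          mul_one_div_cancel hq0.ne', Real.rpow_one]

lemma telescope (hμ0 : ∀ x, 0 ≤ μ x) (hμ1 : ∑ x, μ x = 1) {q γ : ℝ}
    (hq : 1 < q) (hγ : 0 ≤ γ) (hX : IsQGammaProduct μ q γ)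
    {U : Finset (Fin d)} {j : Fin d} {g : (Fin d → Ω) → ℝ} (hg : DepOn (insert j U) g) :
    ∀ (n : ℕ) (W : Finset (Fin d)), (W \ U).card = n → U ⊆ W → j ∉ W →
      pnorm μ q (fun x => projE μ W g x - projE μ U g x) ≤ n * γ * pnorm μ q g := by
  intro n
  induction n with
  | zero =>
      intro W hn hUW hjW
      have hWU : W = U := by
        have h0 := Finset.card_eq_zero.mp hn
        have h2 : W ⊆ U := by
          intro a ha
          by_contra hc
          exact absurd (Finset.mem_sdiff.mpr ⟨ha, hc⟩)
            (by rw [h0]; exact Finset.notMem_empty a)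
        exact Finset.Subset.antisymm h2 hUW
      subst hWU
      rw [show (fun x => projE μ W g x - projE μ W g x) = (fun _ : Fin d → Ω => (0:ℝ))
        from funext fun x => sub_self _]
      rw [pnorm_zero (μ := μ) ((lt_trans one_pos hq).ne')]
      simp [mul_nonneg hγ (pnorm_nonneg hμ0 q g)]
  | succ n ih =>
      intro W hn hUW hjW
      have hne : (W \ U).Nonempty := Finset.card_pos.mp (by omega)
      obtain ⟨i, hi⟩ := hne
      have hiW : i ∈ W := (Finset.mem_sdiff.mp hi).1
      have hiU : i ∉ U := (Finset.mem_sdiff.mp hi).2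
      have h1 : pnorm μ q (fun x => projE μ W g x - projE μ (W.erase i) g x)
          ≤ γ * pnorm μ q g :=
        link_step hμ0 hμ1 hq hγ hX hUW hiW hiU hjW hg
      have hcard2 : ((W.erase i) \ U).card = n := by
        rw [Finset.erase_sdiff_comm, Finset.card_erase_of_mem hi, hn]
        omega
      have h2 := ih (W.erase i) hcard2 (Finset.subset_erase.mpr ⟨hUW, hiU⟩)
        (fun h => hjW (Finset.erase_subset i W h))
      have h3 : pnorm μ q (fun x => projE μ W g x - projE μ U g x)
          ≤ pnorm μ q (fun x => projE μ W g x - projE μ (W.erase i) g x)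
            + pnorm μ q (fun x => projE μ (W.erase i) g x - projE μ U g x) := by
        have e : (fun x => projE μ W g x - projE μ U g x)
            = fun x => (projE μ W g x - projE μ (W.erase i) g x)
                + (projE μ (W.erase i) g x - projE μ U g x) := funext fun x => by ring
        rw [e]
        exact pnorm_add_le hμ0 hq.le _ _
      calc pnorm μ q (fun x => projE μ W g x - projE μ U g x)
          ≤ γ * pnorm μ q g + ↑n * γ * pnorm μ q g := le_trans h3 (add_le_add h1 h2)
        _ = ((n+1 : ℕ) : ℝ) * γ * pnorm μ q g := by push_cast; ring

lemma esComp_pair {s : Finset (Fin d)} {j : Fin d} (hjs : j ∉ s)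
    (f : (Fin d → Ω) → ℝ) (x : Fin d → Ω) :
    esComp μ (insert j s) f x = ∑ U ∈ s.powerset,
      (-1:ℝ) ^ ((insert j s).card - U.card - 1)
        * (projE μ (insert j U) f x - projE μ U f x) := by
  unfold esComp
  rw [Finset.sum_powerset_insert hjs, ← Finset.sum_add_distrib]
  refine Finset.sum_congr rfl fun U hU => ?_
  have hUs : U ⊆ s := Finset.mem_powerset.mp hU
  have hjU : j ∉ U := fun h => hjs (hUs h)
  have hcins : (insert j U).card = U.card + 1 := Finset.card_insert_of_notMem hjU
  have hcS : (insert j s).card = s.card + 1 := Finset.card_insert_of_notMem hjs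
  have hUcard : U.card ≤ s.card := Finset.card_le_card hUs
  rw [hcins, hcS]
  have e3 : s.card + 1 - U.card - 1 = s.card - U.card := by omega
  have e1 : s.card + 1 - U.card = (s.card - U.card) + 1 := by omega
  have e2 : s.card + 1 - (U.card + 1) = s.card - U.card := by omega
  rw [e3, e1, e2, pow_succ]
  ring

lemma main_bound (hμ0 : ∀ x, 0 ≤ μ x) (hμ1 : ∑ x, μ x = 1) {q γ : ℝ}
    (hq : 1 < q) (hγ : 0 ≤ γ) (hX : IsQGammaProduct μ q γ)
    {S T : Finset (Fin d)} (hST : ¬ S ⊆ T) (f : (Fin d → Ω) → ℝ) :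
    pnorm μ q (projE μ T (esComp μ S f))
      ≤ ((2:ℝ) ^ (2*d : ℕ)) * γ * pnorm μ q f := by
  obtain ⟨j, hjS, hjT⟩ := Finset.not_subset.mp hST
  have hd : 0 < d := j.pos
  set S' := S.erase j with hS'def
  have hjS' : j ∉ S' := Finset.notMem_erase j S
  have hSins : insert j S' = S := Finset.insert_erase hjS
  have hesC : ∀ x, esComp μ S f x = ∑ U ∈ S'.powerset,
      (-1:ℝ) ^ (S.card - U.card - 1)
        * (projE μ (insert j U) f x - projE μ U f x) := by
    intro x
    have h := esComp_pair (μ := μ) hjS' f x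
    rw [hSins] at h
    exact h
  have hproj : projE μ T (esComp μ S f) = fun x => ∑ U ∈ S'.powerset,
      (-1:ℝ) ^ (S.card - U.card - 1)
        * projE μ T (fun y => projE μ (insert j U) f y - projE μ U f y) x := by
    funext x
    rw [show esComp μ S f = fun y => ∑ U ∈ S'.powerset,
        (-1:ℝ) ^ (S.card - U.card - 1)
          * (projE μ (insert j U) f y - projE μ U f y) from funext hesC]
    rw [projE_sum]
    exact Finset.sum_congr rfl fun U _ => projE_smul μ T _ _ x
  have hUbound : ∀ U ∈ S'.powerset,
      pnorm μ q (projE μ T (fun y => projE μ (insert j U) f y - projE μ U f y))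
        ≤ (d:ℝ) * γ * (2 * pnorm μ q f) := by
    intro U hU
    have hUS' : U ⊆ S' := Finset.mem_powerset.mp hU
    have hjU : j ∉ U := fun h => hjS' (hUS' h)
    have hdep : DepOn (insert j U)
        (fun y => projE μ (insert j U) f y - projE μ U f y) := by
      intro x y hxy
      dsimp only
      rw [projE_depOn μ (insert j U) f x y hxy,
        projE_depOn μ U f x y (fun k hk => hxy k (Finset.mem_insert_of_mem hk))]
    have hjW' : j ∉ T ∪ U := fun h => by
      rcases Finset.mem_union.mp h with h | h
      · exact hjT h
      · exact hjU h
    have hzero : ∀ x, projE μ U (fun y => projE μ (insert j U) f y - projE μ U f y) x = 0 := by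
      intro x
      rw [projE_sub, tower hμ0 (Finset.subset_insert j U) f x,
        tower hμ0 (Finset.Subset.refl U) f x, sub_self]
    have htow : projE μ T (fun y => projE μ (insert j U) f y - projE μ U f y)
        = projE μ T (projE μ (T ∪ U) (fun y => projE μ (insert j U) f y - projE μ U f y)) :=
      funext fun x => (tower hμ0 Finset.subset_union_left _ x).symm
    have htele := telescope hμ0 hμ1 hq hγ hX hdep (((T ∪ U) \ U).card) (T ∪ U) rfl
      Finset.subset_union_right hjW'
    have hgU : pnorm μ q (fun y => projE μ (insert j U) f y - projE μ U f y)
        ≤ 2 * pnorm μ q f := by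
      calc pnorm μ q (fun y => projE μ (insert j U) f y - projE μ U f y)
          ≤ pnorm μ q (projE μ (insert j U) f) + pnorm μ q (projE μ U f) :=
            pnorm_sub_le hμ0 hq.le _ _
        _ ≤ pnorm μ q f + pnorm μ q f :=
            add_le_add (pnorm_projE_le hμ0 hμ1 hq.le _ f) (pnorm_projE_le hμ0 hμ1 hq.le _ f)
        _ = 2 * pnorm μ q f := (two_mul _).symm
    have hWc : (((T ∪ U) \ U).card : ℝ) ≤ (d : ℝ) := by
      have h1 : ((T ∪ U) \ U).card ≤ d := by
        calc ((T ∪ U) \ U).card ≤ (T ∪ U).card := Finset.card_le_card (Finset.sdiff_subset)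
          _ ≤ d := by simpa using Finset.card_le_univ (T ∪ U)
      exact_mod_cast h1
    calc pnorm μ q (projE μ T (fun y => projE μ (insert j U) f y - projE μ U f y))
        = pnorm μ q (projE μ T (projE μ (T ∪ U)
            (fun y => projE μ (insert j U) f y - projE μ U f y))) := by rw [htow]
      _ ≤ pnorm μ q (projE μ (T ∪ U)
            (fun y => projE μ (insert j U) f y - projE μ U f y)) :=
          pnorm_projE_le hμ0 hμ1 hq.le _ _
      _ = pnorm μ q (fun x => projE μ (T ∪ U)
              (fun y => projE μ (insert j U) f y - projE μ U f y) x
            - projE μ U (fun y => projE μ (insert j U) f y - projE μ U f y) x) := by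
          refine pnorm_congr fun x _ => ?_
          rw [hzero x, sub_zero]
      _ ≤ (((T ∪ U) \ U).card : ℝ) * γ
            * pnorm μ q (fun y => projE μ (insert j U) f y - projE μ U f y) := htele
      _ ≤ (d:ℝ) * γ * (2 * pnorm μ q f) := by
          calc (((T ∪ U) \ U).card : ℝ) * γ
                * pnorm μ q (fun y => projE μ (insert j U) f y - projE μ U f y)
              ≤ (d:ℝ) * γ
                * pnorm μ q (fun y => projE μ (insert j U) f y - projE μ U f y) :=
                mul_le_mul_of_nonneg_right (mul_le_mul_of_nonneg_right hWc hγ)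
                  (pnorm_nonneg hμ0 q _)
            _ ≤ (d:ℝ) * γ * (2 * pnorm μ q f) :=
                mul_le_mul_of_nonneg_left hgU (mul_nonneg (Nat.cast_nonneg d) hγ)
  have habs : ∀ U : Finset (Fin d),
      |(-1:ℝ) ^ (S.card - U.card - 1)| = 1 := by
    intro U
    rw [abs_pow, abs_neg, abs_one, one_pow]
  have hsum : pnorm μ q (projE μ T (esComp μ S f))
      ≤ ∑ U ∈ S'.powerset, (d:ℝ) * γ * (2 * pnorm μ q f) := by
    rw [hproj]
    refine le_trans (pnorm_sum_le hμ0 hq.le S'.powerset _) ?_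
    refine Finset.sum_le_sum fun U hU => ?_
    rw [pnorm_smul hμ0 (lt_trans one_pos hq), habs U, one_mul]
    exact hUbound U hU
  have hcardpow : S'.card ≤ d - 1 := by
    have h1 : S.card ≤ d := by simpa using Finset.card_le_univ S
    have h2 : S'.card = S.card - 1 := Finset.card_erase_of_mem hjS
    have h3 : 1 ≤ S.card := Finset.card_pos.mpr ⟨j, hjS⟩
    omega
  have hnat : 2 ^ S'.card * (2 * d) ≤ 2 ^ (2 * d) := by
    have h1 : 2 ^ S'.card ≤ 2 ^ (d-1) := Nat.pow_le_pow_right (by norm_num) hcardpow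
    have h2 : 2 ^ (d-1) * (2 * d) = 2 ^ d * d := by
      have e : d - 1 + 1 = d := by omega
      calc 2 ^ (d-1) * (2 * d) = 2 ^ (d-1) * 2 * d := by ring
        _ = 2 ^ (d-1+1) * d := by rw [pow_succ]
        _ = 2 ^ d * d := by rw [e]
    have h3 : d ≤ 2 ^ d := Nat.le_of_lt (Nat.lt_two_pow_self (n := d))
    calc 2 ^ S'.card * (2 * d) ≤ 2 ^ (d-1) * (2 * d) := Nat.mul_le_mul_right _ h1
      _ = 2 ^ d * d := h2
      _ ≤ 2 ^ d * 2 ^ d := Nat.mul_le_mul_left _ h3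
      _ = 2 ^ (2 * d) := by rw [← pow_add]; congr 1; omega
  have hγp : (0:ℝ) ≤ γ * pnorm μ q f := mul_nonneg hγ (pnorm_nonneg hμ0 q f)
  calc pnorm μ q (projE μ T (esComp μ S f))
      ≤ ∑ U ∈ S'.powerset, (d:ℝ) * γ * (2 * pnorm μ q f) := hsum
    _ = ((2 ^ S'.card * (2 * d) : ℕ) : ℝ) * (γ * pnorm μ q f) := by
        rw [Finset.sum_const, Finset.card_powerset, nsmul_eq_mul]
        push_cast
        ring
    _ ≤ ((2 ^ (2 * d) : ℕ) : ℝ) * (γ * pnorm μ q f) := by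
        refine mul_le_mul_of_nonneg_right ?_ hγp
        exact_mod_cast hnat
    _ = ((2:ℝ) ^ (2*d : ℕ)) * γ * pnorm μ q f := by
        push_cast
        ring

end AEV

/-- approximate eigenvector property. There is a universal
constant `C` such that on any `(q,γ)`-product, for `M = ∑_{T⊆[d]} α_T E_T`:
`‖M f^{=S} − λ_S f^{=S}‖_q ≤ |α|₁ · 2^{C·d} · γ · ‖f‖_q`, where
`λ_S = ∑_{T ⊇ S} α_T` and `|α|₁ = ∑_T |α_T|`. -/
theorem approximate_eigenvector :
    ∃ C : ℝ, 0 < C ∧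
      ∀ (d : ℕ) (Ω : Type) [Fintype Ω] [DecidableEq Ω]
        (μ : (Fin d → Ω) → ℝ), (∀ x, 0 ≤ μ x) → (∑ x, μ x = 1) →
        ∀ q γ : ℝ, 1 < q → 0 ≤ γ → IsQGammaProduct μ q γ →
        ∀ (α : Finset (Fin d) → ℝ) (S : Finset (Fin d)) (f : (Fin d → Ω) → ℝ),
          pnorm μ q (fun x =>
              (∑ T ∈ (univ : Finset (Fin d)).powerset, α T * projE μ T (esComp μ S f) x)
                - (∑ T ∈ (univ : Finset (Fin d)).powerset.filter (fun T => S ⊆ T), α T)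
                    * esComp μ S f x)
            ≤ (∑ T ∈ (univ : Finset (Fin d)).powerset, |α T|) * 2 ^ (C * d) * γ
                * pnorm μ q f := by
  refine ⟨2, two_pos, ?_⟩
  intro d Ω _ _ μ hμ0 hμ1 q γ hq hγ hX α S f
  have hq0 : (0:ℝ) < q := lt_trans one_pos hq
  have hdepS : AEV.DepOn S (esComp μ S f) := by
    intro x y hxy
    unfold esComp
    refine Finset.sum_congr rfl fun T' hT' => ?_
    have hT'S : T' ⊆ S := Finset.mem_powerset.mp hT'
    rw [AEV.projE_depOn μ T' f x y (fun k hk => hxy k (hT'S hk))]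
  have hpt : (fun x =>
      (∑ T ∈ (univ : Finset (Fin d)).powerset, α T * projE μ T (esComp μ S f) x)
        - (∑ T ∈ (univ : Finset (Fin d)).powerset.filter (fun T => S ⊆ T), α T)
            * esComp μ S f x)
      = fun x => ∑ T ∈ (univ : Finset (Fin d)).powerset,
          α T * (projE μ T (esComp μ S f) x
            - (if S ⊆ T then 1 else 0) * esComp μ S f x) := by
    funext x
    rw [Finset.sum_filter, Finset.sum_mul, ← Finset.sum_sub_distrib]
    refine Finset.sum_congr rfl fun T hT => ?_
    split_ifs with h
    · ring
    · ring
  rw [hpt]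
  have hK : ∀ T ∈ (univ : Finset (Fin d)).powerset,
      pnorm μ q (fun x => α T * (projE μ T (esComp μ S f) x
          - (if S ⊆ T then 1 else 0) * esComp μ S f x))
        ≤ |α T| * (((2:ℝ) ^ (2*d : ℕ)) * γ * pnorm μ q f) := by
    intro T _
    rw [AEV.pnorm_smul hμ0 hq0]
    refine mul_le_mul_of_nonneg_left ?_ (abs_nonneg (α T))
    by_cases hST : S ⊆ T
    · have hz : pnorm μ q (fun x => projE μ T (esComp μ S f) x
          - (if S ⊆ T then 1 else 0) * esComp μ S f x) = 0 := by
        refine AEV.pnorm_zero' hq0.ne' fun x hx => ?_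
        have hμx : 0 < μ x := lt_of_le_of_ne (hμ0 x) (Ne.symm hx)
        rw [if_pos hST, one_mul, AEV.projE_self hμ0 (hdepS.mono hST) hμx, sub_self]
      rw [hz]
      have h2 : (0:ℝ) ≤ (2:ℝ) ^ (2*d : ℕ) := by positivity
      exact mul_nonneg (mul_nonneg h2 hγ) (AEV.pnorm_nonneg hμ0 q f)
    · have he : (fun x => projE μ T (esComp μ S f) x
          - (if S ⊆ T then 1 else 0) * esComp μ S f x)
          = projE μ T (esComp μ S f) :=
        funext fun x => by rw [if_neg hST, zero_mul, sub_zero]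
      rw [he]
      exact AEV.main_bound hμ0 hμ1 hq hγ hX hST f
  have hpow : (2:ℝ) ^ ((2:ℝ) * (d:ℝ)) = ((2:ℝ) ^ (2*d : ℕ)) := by
    rw [← Real.rpow_natCast 2 (2*d)]
    congr 1
    push_cast
    ring
  calc pnorm μ q (fun x => ∑ T ∈ (univ : Finset (Fin d)).powerset,
        α T * (projE μ T (esComp μ S f) x
          - (if S ⊆ T then 1 else 0) * esComp μ S f x))
      ≤ ∑ T ∈ (univ : Finset (Fin d)).powerset,
          pnorm μ q (fun x => α T * (projE μ T (esComp μ S f) x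
            - (if S ⊆ T then 1 else 0) * esComp μ S f x)) :=
        AEV.pnorm_sum_le hμ0 hq.le _ _
    _ ≤ ∑ T ∈ (univ : Finset (Fin d)).powerset,
          |α T| * (((2:ℝ) ^ (2*d : ℕ)) * γ * pnorm μ q f) :=
        Finset.sum_le_sum hK
    _ = (∑ T ∈ (univ : Finset (Fin d)).powerset, |α T|)
          * (((2:ℝ) ^ (2*d : ℕ)) * γ * pnorm μ q f) := by
        rw [Finset.sum_mul]
    _ = (∑ T ∈ (univ : Finset (Fin d)).powerset, |α T|) * 2 ^ ((2:ℝ) * d) * γ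
          * pnorm μ q f := by
        rw [hpow]
        ring
end

section
/- Approximate closure of the Efron-Stein basis: for X a d-partite (q,γ)-product, f : X(d) → ℝ, and S ≠ T ⊆ [d], ‖(f^{=S})^{=T}‖_q ≤ 2^{O(d)} γ ‖f‖_q, while ‖(f^{=S})^{=S} − f^{=S}‖_q ≤ 2^{O(d)} γ ‖f‖_q. -/
open Finset BigOperators

namespace ESaux

variable {d : ℕ} {Ω : Type} [Fintype Ω] [DecidableEq Ω]

noncomputable def Zc (μ : (Fin d → Ω) → ℝ) (T : Finset (Fin d)) (x : Fin d → Ω) : ℝ :=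
  ∑ y : Fin d → Ω, if ∀ i ∈ T, y i = x i then μ y else 0

noncomputable def Nc (μ : (Fin d → Ω) → ℝ) (T : Finset (Fin d)) (f : (Fin d → Ω) → ℝ)
    (x : Fin d → Ω) : ℝ :=
  ∑ y : Fin d → Ω, if ∀ i ∈ T, y i = x i then μ y * f y else 0

theorem projE_eq (μ : (Fin d → Ω) → ℝ) (T : Finset (Fin d)) (f : (Fin d → Ω) → ℝ)
    (x : Fin d → Ω) : projE μ T f x = Nc μ T f x / Zc μ T x := rfl

variable {μ : (Fin d → Ω) → ℝ}

theorem Zc_nonneg (hμ : ∀ x, 0 ≤ μ x) (T : Finset (Fin d)) (x : Fin d → Ω) :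
    0 ≤ Zc μ T x := by
  refine Finset.sum_nonneg fun y _ => ?_
  split <;> simp [hμ y]

theorem mu_le_Zc (hμ : ∀ x, 0 ≤ μ x) (T : Finset (Fin d)) (x : Fin d → Ω) :
    μ x ≤ Zc μ T x := by
  have : μ x = if ∀ i ∈ T, x i = x i then μ x else 0 := by simp
  rw [this]
  refine Finset.single_le_sum (f := fun y => if ∀ i ∈ T, y i = x i then μ y else 0)
    (fun y _ => ?_) (Finset.mem_univ x)
  split <;> simp [hμ y]

theorem Zc_pos (hμ : ∀ x, 0 ≤ μ x) {T : Finset (Fin d)} {x : Fin d → Ω} (hx : μ x ≠ 0) :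
    0 < Zc μ T x :=
  lt_of_lt_of_le (lt_of_le_of_ne (hμ x) (Ne.symm hx)) (mu_le_Zc hμ T x)

theorem mu_eq_zero_of_Zc (hμ : ∀ x, 0 ≤ μ x) {T : Finset (Fin d)} {x : Fin d → Ω}
    (hZ : Zc μ T x = 0) {y : Fin d → Ω} (hy : ∀ i ∈ T, y i = x i) : μ y = 0 := by
  have h0 := (Finset.sum_eq_zero_iff_of_nonneg (fun y _ => by
    split <;> simp [hμ y] : ∀ y ∈ Finset.univ, 0 ≤ if ∀ i ∈ T, y i = x i then μ y else 0)).1 hZ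
  have := h0 y (Finset.mem_univ y)
  rw [if_pos hy] at this
  exact this

theorem Zc_congr {T : Finset (Fin d)} {x x' : Fin d → Ω} (h : ∀ i ∈ T, x i = x' i) :
    Zc μ T x = Zc μ T x' := by
  refine Finset.sum_congr rfl fun y _ => ?_
  have : (∀ i ∈ T, y i = x i) ↔ (∀ i ∈ T, y i = x' i) :=
    ⟨fun hy i hi => (hy i hi).trans (h i hi), fun hy i hi => (hy i hi).trans (h i hi).symm⟩
  simp only [this]

theorem Nc_congr {T : Finset (Fin d)} {f : (Fin d → Ω) → ℝ} {x x' : Fin d → Ω}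
    (h : ∀ i ∈ T, x i = x' i) : Nc μ T f x = Nc μ T f x' := by
  refine Finset.sum_congr rfl fun y _ => ?_
  have : (∀ i ∈ T, y i = x i) ↔ (∀ i ∈ T, y i = x' i) :=
    ⟨fun hy i hi => (hy i hi).trans (h i hi), fun hy i hi => (hy i hi).trans (h i hi).symm⟩
  simp only [this]

theorem projE_congr (T : Finset (Fin d)) (f : (Fin d → Ω) → ℝ) {x x' : Fin d → Ω}
    (h : ∀ i ∈ T, x i = x' i) : projE μ T f x = projE μ T f x' := by
  rw [projE_eq, projE_eq, Zc_congr h, Nc_congr h]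

theorem Nc_eq_sum_mul (T : Finset (Fin d)) (f : (Fin d → Ω) → ℝ) (x : Fin d → Ω) :
    Nc μ T f x = ∑ y : Fin d → Ω, (if ∀ i ∈ T, y i = x i then μ y else 0) * f y := by
  refine Finset.sum_congr rfl fun y _ => ?_
  split <;> simp

/-- Core summation ("tower") identity. -/
theorem tow2 (hμ : ∀ x, 0 ≤ μ x) {A B : Finset (Fin d)} (hAB : A ⊆ B)
    (f : (Fin d → Ω) → ℝ) (x : Fin d → Ω) :
    ∑ y : Fin d → Ω, (if ∀ i ∈ A, y i = x i then μ y else 0) * projE μ B f y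
      = ∑ y : Fin d → Ω, (if ∀ i ∈ A, y i = x i then μ y else 0) * f y := by
  have step1 : ∀ y : Fin d → Ω,
      (if ∀ i ∈ A, y i = x i then μ y else 0) * projE μ B f y
        = ∑ w : Fin d → Ω, (if ∀ i ∈ A, y i = x i then μ y else 0) *
            ((if ∀ i ∈ B, w i = y i then μ w * f w else 0) / Zc μ B y) := by
    intro y
    rw [projE_eq, Nc, Finset.sum_div, Finset.mul_sum]
  calc ∑ y : Fin d → Ω, (if ∀ i ∈ A, y i = x i then μ y else 0) * projE μ B f y
      = ∑ y : Fin d → Ω, ∑ w : Fin d → Ω, (if ∀ i ∈ A, y i = x i then μ y else 0) *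
          ((if ∀ i ∈ B, w i = y i then μ w * f w else 0) / Zc μ B y) :=
        Finset.sum_congr rfl fun y _ => step1 y
    _ = ∑ w : Fin d → Ω, ∑ y : Fin d → Ω, (if ∀ i ∈ A, y i = x i then μ y else 0) *
          ((if ∀ i ∈ B, w i = y i then μ w * f w else 0) / Zc μ B y) := Finset.sum_comm
    _ = ∑ w : Fin d → Ω, (if ∀ i ∈ A, w i = x i then μ w else 0) * f w := by
        refine Finset.sum_congr rfl fun w _ => ?_
        have per : ∀ y : Fin d → Ω,
            (if ∀ i ∈ A, y i = x i then μ y else 0) *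
              ((if ∀ i ∈ B, w i = y i then μ w * f w else 0) / Zc μ B y)
            = (if ∀ i ∈ B, y i = w i then μ y else 0) *
                ((if ∀ i ∈ A, w i = x i then μ w * f w else 0) / Zc μ B w) := by
          intro y
          by_cases hby : ∀ i ∈ B, w i = y i
          · have hby' : ∀ i ∈ B, y i = w i := fun i hi => (hby i hi).symm
            have hZ : Zc μ B y = Zc μ B w := Zc_congr hby'
            have hA : (∀ i ∈ A, y i = x i) ↔ (∀ i ∈ A, w i = x i) :=
              ⟨fun h i hi => (hby i (hAB hi)).trans (h i hi),
               fun h i hi => (hby' i (hAB hi)).trans (h i hi)⟩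
            simp only [if_pos hby, if_pos hby', hZ, hA]
            by_cases hAw : ∀ i ∈ A, w i = x i
            · simp [if_pos hAw]
            · simp [if_neg hAw]
          · have hby' : ¬ ∀ i ∈ B, y i = w i := fun h => hby fun i hi => (h i hi).symm
            simp [if_neg hby, if_neg hby']
        rw [Finset.sum_congr rfl fun y _ => per y, ← Finset.sum_mul]
        have : (∑ y : Fin d → Ω, if ∀ i ∈ B, y i = w i then μ y else 0) = Zc μ B w := rfl
        rw [this]
        by_cases hZ : Zc μ B w = 0
        · have hw : μ w = 0 := mu_eq_zero_of_Zc hμ hZ (fun i hi => rfl)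
          simp [hw, hZ]
        · rw [mul_div_cancel₀ _ hZ]
          by_cases hAw : ∀ i ∈ A, w i = x i <;> simp [hAw]

theorem tow_global (hμ : ∀ x, 0 ≤ μ x) (B : Finset (Fin d)) (f : (Fin d → Ω) → ℝ) :
    ∑ y : Fin d → Ω, μ y * projE μ B f y = ∑ y : Fin d → Ω, μ y * f y := by
  cases isEmpty_or_nonempty (Fin d → Ω) with
  | inl h => simp [Finset.univ_eq_empty]
  | inr h =>
    have := tow2 hμ (Finset.empty_subset B) f (Classical.arbitrary _)
    simpa using this

theorem Nc_add (T : Finset (Fin d)) (f g : (Fin d → Ω) → ℝ) (x : Fin d → Ω) :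
    Nc μ T (fun y => f y + g y) x = Nc μ T f x + Nc μ T g x := by
  rw [Nc, Nc, Nc, ← Finset.sum_add_distrib]
  refine Finset.sum_congr rfl fun y _ => ?_
  split <;> ring

theorem Nc_sub (T : Finset (Fin d)) (f g : (Fin d → Ω) → ℝ) (x : Fin d → Ω) :
    Nc μ T (fun y => f y - g y) x = Nc μ T f x - Nc μ T g x := by
  rw [Nc, Nc, Nc, ← Finset.sum_sub_distrib]
  refine Finset.sum_congr rfl fun y _ => ?_
  split <;> ring

theorem Nc_const_mul (T : Finset (Fin d)) (c : ℝ) (f : (Fin d → Ω) → ℝ) (x : Fin d → Ω) :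
    Nc μ T (fun y => c * f y) x = c * Nc μ T f x := by
  rw [Nc, Nc, Finset.mul_sum]
  refine Finset.sum_congr rfl fun y _ => ?_
  split <;> ring

theorem projE_add (T : Finset (Fin d)) (f g : (Fin d → Ω) → ℝ) (x : Fin d → Ω) :
    projE μ T (fun y => f y + g y) x = projE μ T f x + projE μ T g x := by
  rw [projE_eq, projE_eq, projE_eq, Nc_add, add_div]

theorem projE_sub (T : Finset (Fin d)) (f g : (Fin d → Ω) → ℝ) (x : Fin d → Ω) :
    projE μ T (fun y => f y - g y) x = projE μ T f x - projE μ T g x := by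
  rw [projE_eq, projE_eq, projE_eq, Nc_sub, sub_div]

theorem projE_const_mul (T : Finset (Fin d)) (c : ℝ) (f : (Fin d → Ω) → ℝ) (x : Fin d → Ω) :
    projE μ T (fun y => c * f y) x = c * projE μ T f x := by
  rw [projE_eq, projE_eq, Nc_const_mul, mul_div_assoc]

theorem Nc_sumF {ι : Type*} (s : Finset ι) (T : Finset (Fin d)) (F : ι → (Fin d → Ω) → ℝ)
    (x : Fin d → Ω) :
    Nc μ T (fun y => ∑ i ∈ s, F i y) x = ∑ i ∈ s, Nc μ T (F i) x := by
  calc Nc μ T (fun y => ∑ i ∈ s, F i y) x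
      = ∑ y : Fin d → Ω, ∑ i ∈ s, (if ∀ i ∈ T, y i = x i then μ y * F i y else 0) := by
        refine Finset.sum_congr rfl fun y _ => ?_
        by_cases hc : ∀ i ∈ T, y i = x i
        · simp only [if_pos hc, Finset.mul_sum]
        · simp [hc]
    _ = ∑ i ∈ s, Nc μ T (F i) x := Finset.sum_comm

theorem projE_sumF {ι : Type*} (s : Finset ι) (T : Finset (Fin d)) (F : ι → (Fin d → Ω) → ℝ)
    (x : Fin d → Ω) :
    projE μ T (fun y => ∑ i ∈ s, F i y) x = ∑ i ∈ s, projE μ T (F i) x := by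
  rw [projE_eq, Nc_sumF, Finset.sum_div]
  rfl

/-- `h` depends only on the coordinates in `B`. -/
def Junta (B : Finset (Fin d)) (h : (Fin d → Ω) → ℝ) : Prop :=
  ∀ a b : Fin d → Ω, (∀ i ∈ B, a i = b i) → h a = h b

theorem junta_mono {B B' : Finset (Fin d)} (hBB : B ⊆ B') {h : (Fin d → Ω) → ℝ}
    (hh : Junta B h) : Junta B' h :=
  fun a b hab => hh a b fun i hi => hab i (hBB hi)

theorem junta_projE (T : Finset (Fin d)) (f : (Fin d → Ω) → ℝ) :
    Junta T (projE μ T f) := fun a b hab => projE_congr T f hab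

theorem projE_of_junta (hμ : ∀ x, 0 ≤ μ x) {B : Finset (Fin d)} {h : (Fin d → Ω) → ℝ}
    (hh : Junta B h) {x : Fin d → Ω} (hx : μ x ≠ 0) : projE μ B h x = h x := by
  rw [projE_eq]
  have hN : Nc μ B h x = Zc μ B x * h x := by
    rw [Nc, Zc, Finset.sum_mul]
    refine Finset.sum_congr rfl fun y _ => ?_
    by_cases hc : ∀ i ∈ B, y i = x i
    · rw [if_pos hc, if_pos hc, hh y x hc]
    · simp [hc]
  rw [hN, mul_comm, mul_div_assoc, div_self (ne_of_gt (Zc_pos hμ hx)), mul_one]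

theorem projE_tower (hμ : ∀ x, 0 ≤ μ x) {A B : Finset (Fin d)} (hAB : A ⊆ B)
    (f : (Fin d → Ω) → ℝ) (x : Fin d → Ω) :
    projE μ A (projE μ B f) x = projE μ A f x := by
  rw [projE_eq, projE_eq]
  congr 1
  rw [Nc_eq_sum_mul, Nc_eq_sum_mul, tow2 hμ hAB]

section pnormlemmas

variable {α : Type} [Fintype α]

theorem pnorm_nonneg (ν : α → ℝ) (hν : ∀ x, 0 ≤ ν x) (q : ℝ) (f : α → ℝ) :
    0 ≤ pnorm ν q f :=
  Real.rpow_nonneg (Finset.sum_nonneg fun x _ =>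
    mul_nonneg (hν x) (Real.rpow_nonneg (abs_nonneg _) _)) _

theorem pnorm_sum_nonneg (ν : α → ℝ) (hν : ∀ x, 0 ≤ ν x) (q : ℝ) (f : α → ℝ) :
    0 ≤ ∑ x, ν x * |f x| ^ q :=
  Finset.sum_nonneg fun x _ => mul_nonneg (hν x) (Real.rpow_nonneg (abs_nonneg _) _)

theorem pnorm_congr (ν : α → ℝ) (q : ℝ) {f g : α → ℝ} (h : ∀ x, ν x ≠ 0 → f x = g x) :
    pnorm ν q f = pnorm ν q g := by
  unfold pnorm
  congr 1
  refine Finset.sum_congr rfl fun x _ => ?_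
  by_cases hx : ν x = 0
  · simp [hx]
  · rw [h x hx]

theorem pnorm_eq_zero (ν : α → ℝ) {q : ℝ} (hq : q ≠ 0) {f : α → ℝ}
    (h : ∀ x, ν x ≠ 0 → f x = 0) : pnorm ν q f = 0 := by
  unfold pnorm
  have : ∀ x ∈ Finset.univ, ν x * |f x| ^ q = (0:ℝ) := by
    intro x _
    by_cases hx : ν x = 0
    · simp [hx]
    · rw [h x hx]
      simp [Real.zero_rpow hq]
  rw [Finset.sum_eq_zero this, Real.zero_rpow (by simpa using hq)]

theorem pnorm_rpow_q (ν : α → ℝ) (hν : ∀ x, 0 ≤ ν x) {q : ℝ} (hq : q ≠ 0) (f : α → ℝ) :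
    pnorm ν q f ^ q = ∑ x, ν x * |f x| ^ q := by
  unfold pnorm
  rw [← Real.rpow_mul (pnorm_sum_nonneg ν hν q f), one_div_mul_cancel hq, Real.rpow_one]

theorem pnorm_weight (ν : α → ℝ) (hν : ∀ x, 0 ≤ ν x) {q : ℝ} (hq : 0 < q) (h : α → ℝ)
    (x : α) : ν x * |h x| ^ q = |ν x ^ (1/q) * h x| ^ q := by
  rw [abs_mul, abs_of_nonneg (Real.rpow_nonneg (hν x) _),
    Real.mul_rpow (Real.rpow_nonneg (hν x) _) (abs_nonneg _),
    ← Real.rpow_mul (hν x), one_div_mul_cancel (ne_of_gt hq), Real.rpow_one]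

theorem pnorm_add_le (ν : α → ℝ) (hν : ∀ x, 0 ≤ ν x) {q : ℝ} (hq : 1 ≤ q) (f g : α → ℝ) :
    pnorm ν q (fun x => f x + g x) ≤ pnorm ν q f + pnorm ν q g := by
  have hq0 : 0 < q := lt_of_lt_of_le zero_lt_one hq
  unfold pnorm
  have e1 : ∀ h : α → ℝ, (∑ x, ν x * |h x| ^ q)
      = ∑ x, |ν x ^ (1/q) * h x| ^ q := fun h =>
    Finset.sum_congr rfl fun x _ => pnorm_weight ν hν hq0 h x
  rw [e1, e1, e1]
  have := Real.Lp_add_le Finset.univ (fun x => ν x ^ (1/q) * f x)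
    (fun x => ν x ^ (1/q) * g x) hq
  calc (∑ x, |ν x ^ (1/q) * (f x + g x)| ^ q) ^ (1/q)
      = (∑ x, |ν x ^ (1/q) * f x + ν x ^ (1/q) * g x| ^ q) ^ (1/q) := by
        congr 1
        exact Finset.sum_congr rfl fun x _ => by rw [mul_add]
    _ ≤ _ := this

theorem pnorm_neg (ν : α → ℝ) (q : ℝ) (f : α → ℝ) :
    pnorm ν q (fun x => - f x) = pnorm ν q f := by
  unfold pnorm
  congr 1
  exact Finset.sum_congr rfl fun x _ => by rw [abs_neg]

theorem pnorm_sub_le (ν : α → ℝ) (hν : ∀ x, 0 ≤ ν x) {q : ℝ} (hq : 1 ≤ q) (f g : α → ℝ) :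
    pnorm ν q (fun x => f x - g x) ≤ pnorm ν q f + pnorm ν q g := by
  have h := pnorm_add_le ν hν hq f (fun x => - g x)
  simpa [sub_eq_add_neg, pnorm_neg] using h

theorem pnorm_const_mul (ν : α → ℝ) (hν : ∀ x, 0 ≤ ν x) {q : ℝ} (hq : 0 < q) (c : ℝ)
    (f : α → ℝ) : pnorm ν q (fun x => c * f x) = |c| * pnorm ν q f := by
  unfold pnorm
  have e : ∀ x, ν x * |c * f x| ^ q = |c| ^ q * (ν x * |f x| ^ q) := by
    intro x
    rw [abs_mul, Real.mul_rpow (abs_nonneg c) (abs_nonneg _)]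
    ring
  rw [Finset.sum_congr rfl fun x _ => e x, ← Finset.mul_sum,
    Real.mul_rpow (Real.rpow_nonneg (abs_nonneg c) _) (pnorm_sum_nonneg ν hν q f),
    ← Real.rpow_mul (abs_nonneg c), mul_one_div_cancel (ne_of_gt hq), Real.rpow_one]

theorem pnorm_sum_le {ι : Type*} (ν : α → ℝ) (hν : ∀ x, 0 ≤ ν x) {q : ℝ} (hq : 1 ≤ q)
    (s : Finset ι) (F : ι → α → ℝ) :
    pnorm ν q (fun x => ∑ i ∈ s, F i x) ≤ ∑ i ∈ s, pnorm ν q (F i) := by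
  classical
  induction s using Finset.induction_on with
  | empty =>
      simp only [Finset.sum_empty]
      rw [pnorm_eq_zero ν (by positivity) (fun x _ => rfl)]
  | insert a s ha ih =>
      calc pnorm ν q (fun x => ∑ i ∈ insert a s, F i x)
          = pnorm ν q (fun x => F a x + ∑ i ∈ s, F i x) := by
            apply pnorm_congr
            intro x _
            rw [Finset.sum_insert ha]
        _ ≤ pnorm ν q (F a) + pnorm ν q (fun x => ∑ i ∈ s, F i x) :=
            pnorm_add_le ν hν hq _ _
        _ ≤ pnorm ν q (F a) + ∑ i ∈ s, pnorm ν q (F i) := by linarith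
        _ = ∑ i ∈ insert a s, pnorm ν q (F i) := by rw [Finset.sum_insert ha]

end pnormlemmas

theorem projE_as_weighted (T : Finset (Fin d)) (f : (Fin d → Ω) → ℝ) (x : Fin d → Ω) :
    projE μ T f x
      = ∑ y : Fin d → Ω, ((if ∀ i ∈ T, y i = x i then μ y else 0) / Zc μ T x) * f y := by
  rw [projE_eq, Nc_eq_sum_mul, Finset.sum_div]
  exact Finset.sum_congr rfl fun y _ => by rw [mul_div_right_comm]

theorem pnorm_projE_le (hμ : ∀ x, 0 ≤ μ x) {q : ℝ} (hq : 1 ≤ q) (T : Finset (Fin d))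
    (f : (Fin d → Ω) → ℝ) : pnorm μ q (projE μ T f) ≤ pnorm μ q f := by
  have hq0 : 0 < q := lt_of_lt_of_le zero_lt_one hq
  have key : ∀ x : Fin d → Ω, μ x ≠ 0 →
      |projE μ T f x| ^ q ≤ projE μ T (fun y => |f y| ^ q) x := by
    intro x hx
    have hZ : 0 < Zc μ T x := Zc_pos hμ hx
    set w : (Fin d → Ω) → ℝ := fun y => (if ∀ i ∈ T, y i = x i then μ y else 0) / Zc μ T x
      with hw
    have hwn : ∀ y ∈ Finset.univ, 0 ≤ w y := by
      intro y _
      apply div_nonneg _ (le_of_lt hZ)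
      split <;> simp [hμ y]
    have hws : ∑ y, w y = 1 := by
      rw [hw, ← Finset.sum_div]
      exact div_self (ne_of_gt hZ)
    have e1 : projE μ T f x = ∑ y, w y * f y := projE_as_weighted T f x
    have e2 : projE μ T (fun y => |f y| ^ q) x = ∑ y, w y * |f y| ^ q :=
      projE_as_weighted T _ x
    rw [e1, e2]
    have step1 : |∑ y, w y * f y| ≤ ∑ y, w y * |f y| := by
      refine le_trans (Finset.abs_sum_le_sum_abs _ _) ?_
      refine Finset.sum_le_sum fun y hy => ?_
      rw [abs_mul, abs_of_nonneg (hwn y hy)]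
    calc |∑ y, w y * f y| ^ q ≤ (∑ y, w y * |f y|) ^ q :=
          Real.rpow_le_rpow (abs_nonneg _) step1 (le_of_lt hq0)
      _ ≤ ∑ y, w y * |f y| ^ q :=
          Real.rpow_arith_mean_le_arith_mean_rpow (s := Finset.univ) w (fun y => |f y|)
            hwn hws (fun y _ => abs_nonneg _) hq
  unfold pnorm
  apply Real.rpow_le_rpow (pnorm_sum_nonneg μ hμ q _) _ (by positivity)
  calc ∑ x, μ x * |projE μ T f x| ^ q
      ≤ ∑ x, μ x * projE μ T (fun y => |f y| ^ q) x := by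
        refine Finset.sum_le_sum fun x _ => ?_
        by_cases hx : μ x = 0
        · simp [hx]
        · exact mul_le_mul_of_nonneg_left (key x hx) (hμ x)
    _ = ∑ x, μ x * |f x| ^ q := tow_global hμ T _

theorem condMeasure_eq (W : Finset (Fin d)) (z y : Fin d → Ω) :
    condMeasure μ W z y = (if ∀ i ∈ W, y i = z i then μ y else 0) / Zc μ W z := rfl

theorem cm_nonneg (hμ : ∀ x, 0 ≤ μ x) (W : Finset (Fin d)) (z : Fin d → Ω) :
    ∀ y, 0 ≤ condMeasure μ W z y := by
  intro y
  rw [condMeasure_eq]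
  apply div_nonneg _ (Zc_nonneg hμ W z)
  split <;> simp [hμ y]

theorem cm_ne_zero {W : Finset (Fin d)} {z y : Fin d → Ω}
    (h : condMeasure μ W z y ≠ 0) :
    (∀ i ∈ W, y i = z i) ∧ μ y ≠ 0 ∧ Zc μ W z ≠ 0 := by
  rw [condMeasure_eq] at h
  by_cases hc : ∀ i ∈ W, y i = z i
  · refine ⟨hc, ?_, ?_⟩
    · intro h0; rw [if_pos hc, h0, zero_div] at h; exact h rfl
    · intro h0; rw [h0, div_zero] at h; exact h rfl
  · rw [if_neg hc, zero_div] at h; exact absurd rfl h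

theorem expect_cond (hμ : ∀ x, 0 ≤ μ x) (W : Finset (Fin d)) (z : Fin d → Ω)
    (g : (Fin d → Ω) → ℝ) :
    expect (condMeasure μ W z) g = projE μ W g z := by
  unfold _root_.expect
  rw [projE_eq, Nc_eq_sum_mul, Finset.sum_div]
  refine Finset.sum_congr rfl fun y _ => ?_
  rw [condMeasure_eq, div_mul_eq_mul_div]

theorem pnorm_cond_rpow (hμ : ∀ x, 0 ≤ μ x) {q : ℝ} (hq : q ≠ 0) (W : Finset (Fin d))
    (z : Fin d → Ω) (h : (Fin d → Ω) → ℝ) :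
    pnorm (condMeasure μ W z) q h ^ q = projE μ W (fun y => |h y| ^ q) z := by
  rw [pnorm_rpow_q _ (cm_nonneg hμ W z) hq, ← expect_cond hμ]
  rfl

theorem div_div_same_cancel (a b c : ℝ) (hc : c ≠ 0) : (a / c) / (b / c) = a / b := by
  rw [div_div_div_comm, div_self hc, div_one]

theorem projE_cond_singleton (hμ : ∀ x, 0 ≤ μ x) {W : Finset (Fin d)} {j : Fin d}
    (hjW : j ∉ W) {z x : Fin d → Ω} (hzx : ∀ i ∈ W, x i = z i) (hZ : Zc μ W z ≠ 0)
    (g : (Fin d → Ω) → ℝ) :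
    projE (condMeasure μ W z) {j} g x = projE μ (insert j W) g x := by
  have key : ∀ (F : (Fin d → Ω) → ℝ) (y : Fin d → Ω),
      (if ∀ i ∈ ({j} : Finset (Fin d)), y i = x i then condMeasure μ W z y * F y else 0)
        = (if ∀ i ∈ insert j W, y i = x i then μ y * F y else 0) / Zc μ W z := by
    intro F y
    have hsing : (∀ i ∈ ({j} : Finset (Fin d)), y i = x i) ↔ y j = x j := by simp
    have hins : (∀ i ∈ insert j W, y i = x i) ↔ (y j = x j ∧ ∀ i ∈ W, y i = z i) := by
      rw [Finset.forall_mem_insert]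
      constructor
      · rintro ⟨h1, h2⟩
        exact ⟨h1, fun i hi => (h2 i hi).trans (hzx i hi)⟩
      · rintro ⟨h1, h2⟩
        exact ⟨h1, fun i hi => (h2 i hi).trans (hzx i hi).symm⟩
    by_cases h1 : y j = x j
    · by_cases h2 : ∀ i ∈ W, y i = z i
      · rw [if_pos (hsing.2 h1), if_pos (hins.2 ⟨h1, h2⟩), condMeasure_eq, if_pos h2,
          div_mul_eq_mul_div]
      · rw [if_pos (hsing.2 h1), if_neg (fun hc => h2 (hins.1 hc).2), condMeasure_eq,
          if_neg h2, zero_div, zero_mul]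
    · rw [if_neg (fun hc => h1 (hsing.1 hc)), if_neg (fun hc => h1 (hins.1 hc).1), zero_div]
  rw [projE_eq, projE_eq]
  have hN : Nc (condMeasure μ W z) {j} g x = Nc μ (insert j W) g x / Zc μ W z := by
    rw [Nc, Nc, Finset.sum_div]
    exact Finset.sum_congr rfl fun y _ => key g y
  have hZc : Zc (condMeasure μ W z) {j} x = Zc μ (insert j W) x / Zc μ W z := by
    have := key (fun _ => 1) -- μ y * 1 = μ y needs care; do directly
    rw [Zc, Zc, Finset.sum_div]
    refine Finset.sum_congr rfl fun y _ => ?_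
    have h1 := key (fun _ => 1) y
    simpa using h1
  rw [hN, hZc, div_div_same_cancel _ _ _ hZ]

theorem Nc_congr_f {ν : (Fin d → Ω) → ℝ} {T : Finset (Fin d)} {g₁ g₂ : (Fin d → Ω) → ℝ}
    (h : ∀ y, ν y ≠ 0 → g₁ y = g₂ y) (x : Fin d → Ω) : Nc ν T g₁ x = Nc ν T g₂ x := by
  rw [Nc, Nc]
  refine Finset.sum_congr rfl fun y _ => ?_
  by_cases hy : ν y = 0
  · simp [hy]
  · rw [h y hy]

theorem projE_congr_f {ν : (Fin d → Ω) → ℝ} {T : Finset (Fin d)} {g₁ g₂ : (Fin d → Ω) → ℝ}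
    (h : ∀ y, ν y ≠ 0 → g₁ y = g₂ y) (x : Fin d → Ω) : projE ν T g₁ x = projE ν T g₂ x := by
  rw [projE_eq, projE_eq, Nc_congr_f h]

theorem expect_congr_f {ν : (Fin d → Ω) → ℝ} {g₁ g₂ : (Fin d → Ω) → ℝ}
    (h : ∀ y, ν y ≠ 0 → g₁ y = g₂ y) : expect ν g₁ = expect ν g₂ := by
  unfold _root_.expect
  refine Finset.sum_congr rfl fun y _ => ?_
  by_cases hy : ν y = 0
  · simp [hy]
  · rw [h y hy]

/-- The key expansion lemma, globalized: for a junta `g` depending only on coordinates in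
`insert i W`, conditioning additionally on the fresh coordinate `j` moves the conditional
expectation by at most `γ` in `q`-norm. -/
theorem star_lemma (hμ : ∀ x, 0 ≤ μ x) {q γ : ℝ} (hq : 1 < q) (hγ : 0 ≤ γ)
    (hprod : IsQGammaProduct μ q γ) {W : Finset (Fin d)} {i j : Fin d}
    (hWd : W.card + 2 ≤ d) (hiW : i ∉ W) (hjW : j ∉ W) (hij : i ≠ j)
    {B : Finset (Fin d)} {g : (Fin d → Ω) → ℝ} (hg : Junta B g) (hBWi : B ⊆ insert i W) :
    pnorm μ q (fun x => projE μ (insert j W) g x - projE μ W g x) ≤ γ * pnorm μ q g := by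
  have hq1 : 1 ≤ q := le_of_lt hq
  have hq0 : 0 < q := lt_trans zero_lt_one hq
  have hqne : q ≠ 0 := ne_of_gt hq0
  set h : (Fin d → Ω) → ℝ := fun x => projE μ (insert j W) g x - projE μ W g x with hh
  have claim_z : ∀ z : Fin d → Ω,
      pnorm (condMeasure μ W z) q h ≤ γ * pnorm (condMeasure μ W z) q g := by
    intro z
    set gz : (Fin d → Ω) → ℝ := fun x => g (Function.update z i (x i)) with hgz
    have hgzj : ∀ x y : Fin d → Ω, x i = y i → gz x = gz y := by
      intro x y hxy
      rw [hgz]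
      simp only [hxy]
    have hyp := hprod W z hWd i j hiW hjW hij gz hgzj
    have agree : ∀ y, condMeasure μ W z y ≠ 0 → gz y = g y := by
      intro y hy
      obtain ⟨hyz, -, -⟩ := cm_ne_zero hy
      refine hg _ _ fun b hb => ?_
      rcases Finset.mem_insert.1 (hBWi hb) with hbi | hbW
      · subst hbi; rw [Function.update_self]
      · have hbi : b ≠ i := fun hbi => hiW (hbi ▸ hbW)
        rw [Function.update_of_ne hbi _ _, hyz b hbW]
    have eRHS : pnorm (condMeasure μ W z) q gz = pnorm (condMeasure μ W z) q g :=
      pnorm_congr _ _ agree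
    have eLHS : pnorm (condMeasure μ W z) q
        (fun x => projE (condMeasure μ W z) {j} gz x - expect (condMeasure μ W z) gz)
        = pnorm (condMeasure μ W z) q h := by
      refine pnorm_congr _ _ fun x hx => ?_
      obtain ⟨hxz, -, hZ⟩ := cm_ne_zero hx
      rw [projE_congr_f agree, expect_congr_f agree,
        projE_cond_singleton hμ hjW hxz hZ, expect_cond hμ, hh]
      have : projE μ W g z = projE μ W g x := projE_congr W g fun i hi => (hxz i hi).symm
      rw [this]
    rw [← eRHS, ← eLHS]
    exact hyp
  -- lift to the global measure
  have lifted : ∑ x, μ x * |h x| ^ q ≤ γ ^ q * ∑ x, μ x * |g x| ^ q := by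
    calc ∑ x, μ x * |h x| ^ q
        = ∑ z, μ z * projE μ W (fun y => |h y| ^ q) z := (tow_global hμ W _).symm
      _ ≤ ∑ z, μ z * (γ ^ q * projE μ W (fun y => |g y| ^ q) z) := by
          refine Finset.sum_le_sum fun z _ => ?_
          refine mul_le_mul_of_nonneg_left ?_ (hμ z)
          rw [← pnorm_cond_rpow hμ hqne, ← pnorm_cond_rpow hμ hqne,
            ← Real.mul_rpow hγ (pnorm_nonneg _ (cm_nonneg hμ W z) q g)]
          exact Real.rpow_le_rpow (pnorm_nonneg _ (cm_nonneg hμ W z) q h) (claim_z z)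
            (le_of_lt hq0)
      _ = γ ^ q * ∑ z, μ z * projE μ W (fun y => |g y| ^ q) z := by
          rw [Finset.mul_sum]
          exact Finset.sum_congr rfl fun z _ => by ring
      _ = γ ^ q * ∑ x, μ x * |g x| ^ q := by rw [tow_global hμ W]
  have hγq : (0:ℝ) ≤ γ ^ q := Real.rpow_nonneg hγ q
  calc pnorm μ q h = (∑ x, μ x * |h x| ^ q) ^ (1/q) := rfl
    _ ≤ (γ ^ q * ∑ x, μ x * |g x| ^ q) ^ (1/q) :=
        Real.rpow_le_rpow (pnorm_sum_nonneg μ hμ q h) lifted (by positivity)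
    _ = γ * pnorm μ q g := by
        rw [Real.mul_rpow hγq (pnorm_sum_nonneg μ hμ q g), ← Real.rpow_mul hγ,
          mul_one_div_cancel hqne, Real.rpow_one]
        rfl

/-- Lemma J : conditioning a `B`-junta on one extra fresh coordinate `j` moves it by at most
`|B \ R| γ` in `q`-norm. -/
theorem lemJ (hμ : ∀ x, 0 ≤ μ x) {q γ : ℝ} (hq : 1 < q) (hγ : 0 ≤ γ)
    (hprod : IsQGammaProduct μ q γ) :
    ∀ (n : ℕ) (B R : Finset (Fin d)) (g : (Fin d → Ω) → ℝ), Junta B g →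
      ∀ j : Fin d, j ∉ B → j ∉ R → (B \ R).card = n →
        pnorm μ q (fun x => projE μ (insert j R) g x - projE μ R g x)
          ≤ n * γ * pnorm μ q g := by
  have hq1 : 1 ≤ q := le_of_lt hq
  have hqne : q ≠ 0 := ne_of_gt (lt_trans zero_lt_one hq)
  intro n
  induction n with
  | zero =>
      intro B R g hg j hjB hjR hcard
      have hBR : B ⊆ R := Finset.sdiff_eq_empty_iff_subset.1 (Finset.card_eq_zero.1 hcard)
      have : pnorm μ q (fun x => projE μ (insert j R) g x - projE μ R g x) = 0 := by
        refine pnorm_eq_zero μ hqne fun x hx => ?_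
        rw [projE_of_junta hμ (junta_mono (hBR.trans (Finset.subset_insert j R)) hg) hx,
          projE_of_junta hμ (junta_mono hBR hg) hx, sub_self]
      rw [this]
      simp
  | succ n ih =>
      intro B R g hg j hjB hjR hcard
      have hne : (B \ R).Nonempty := Finset.card_pos.1 (by omega)
      obtain ⟨i, hi⟩ := hne
      have hiB : i ∈ B := (Finset.mem_sdiff.1 hi).1
      have hiR : i ∉ R := (Finset.mem_sdiff.1 hi).2
      set W : Finset (Fin d) := (R ∪ B).erase i with hW
      have hiW : i ∉ W := Finset.notMem_erase i _
      have hjW : j ∉ W := fun hj => by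
        have := Finset.mem_of_mem_erase hj
        rcases Finset.mem_union.1 this with h | h
        · exact hjR h
        · exact hjB h
      have hij : i ≠ j := fun h => hjB (h ▸ hiB)
      have hBWi : B ⊆ insert i W := by
        intro b hb
        by_cases hbi : b = i
        · exact hbi ▸ Finset.mem_insert_self i W
        · exact Finset.mem_insert_of_mem
            (Finset.mem_erase.2 ⟨hbi, Finset.mem_union_right R hb⟩)
      have hRW : R ⊆ W := fun r hr =>
        Finset.mem_erase.2 ⟨fun h => hiR (h ▸ hr), Finset.mem_union_left B hr⟩
      have hWd : W.card + 2 ≤ d := by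
        have h1 : insert i (insert j W) ⊆ Finset.univ := Finset.subset_univ _
        have h2 : (insert i (insert j W)).card = W.card + 2 := by
          rw [Finset.card_insert_of_notMem (by
            simp only [Finset.mem_insert]
            push_neg
            exact ⟨hij, hiW⟩), Finset.card_insert_of_notMem hjW]
        have h3 := Finset.card_le_univ (insert i (insert j W))
        rw [h2] at h3
        simpa using h3
      set u : (Fin d → Ω) → ℝ := fun x => projE μ (insert j W) g x - projE μ W g x with hu
      have hustar : pnorm μ q u ≤ γ * pnorm μ q g :=
        star_lemma hμ hq hγ hprod hWd hiW hjW hij hg hBWi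
      set h : (Fin d → Ω) → ℝ := projE μ W g with hhdef
      have hhj : Junta W h := junta_projE W g
      have hWR : (W \ R).card = n := by
        have : W \ R = (B \ R).erase i := by
          ext x
          simp only [hW, Finset.mem_sdiff, Finset.mem_erase, Finset.mem_union]
          tauto
        rw [this, Finset.card_erase_of_mem hi, hcard]
        omega
      have iden : ∀ x, projE μ (insert j R) g x - projE μ R g x
          = (projE μ (insert j R) h x - projE μ R h x) + projE μ (insert j R) u x := by
        intro x
        have t1 : projE μ (insert j R) g x
            = projE μ (insert j R) (projE μ (insert j W) g) x :=
          (projE_tower hμ (Finset.insert_subset_insert j hRW) g x).symm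
        have t2 : projE μ (insert j W) g = fun y => h y + u y := by
          funext y
          rw [hhdef, hu]
          ring
        have t3 : projE μ R g x = projE μ R h x :=
          (projE_tower hμ hRW g x).symm
        rw [t1, t2, projE_add, t3]
        ring
      calc pnorm μ q (fun x => projE μ (insert j R) g x - projE μ R g x)
          = pnorm μ q (fun x =>
              (projE μ (insert j R) h x - projE μ R h x) + projE μ (insert j R) u x) := by
            refine pnorm_congr μ q fun x _ => iden x
        _ ≤ pnorm μ q (fun x => projE μ (insert j R) h x - projE μ R h x)
              + pnorm μ q (projE μ (insert j R) u) := pnorm_add_le μ hμ hq1 _ _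
        _ ≤ n * γ * pnorm μ q h + γ * pnorm μ q g := by
            refine add_le_add (ih W R h hhj j hjW hjR hWR) ?_
            exact le_trans (pnorm_projE_le hμ hq1 _ u) hustar
        _ ≤ n * γ * pnorm μ q g + γ * pnorm μ q g := by
            have hle : pnorm μ q h ≤ pnorm μ q g := pnorm_projE_le hμ hq1 W g
            have : (0:ℝ) ≤ n * γ := by positivity
            nlinarith
        _ = (n + 1 : ℕ) * γ * pnorm μ q g := by push_cast; ring

/-- Lemma M : `E_A E_B f ≈ E_{A ∩ B} f`. -/
theorem lemM (hμ : ∀ x, 0 ≤ μ x) {q γ : ℝ} (hq : 1 < q) (hγ : 0 ≤ γ)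
    (hprod : IsQGammaProduct μ q γ) :
    ∀ (n : ℕ) (A B : Finset (Fin d)) (f : (Fin d → Ω) → ℝ), (A \ B).card = n →
      pnorm μ q (fun x => projE μ A (projE μ B f) x - projE μ (A ∩ B) f x)
        ≤ n * d * γ * pnorm μ q f := by
  have hq1 : 1 ≤ q := le_of_lt hq
  have hqne : q ≠ 0 := ne_of_gt (lt_trans zero_lt_one hq)
  intro n
  induction n with
  | zero =>
      intro A B f hcard
      have hAB : A ⊆ B := Finset.sdiff_eq_empty_iff_subset.1 (Finset.card_eq_zero.1 hcard)
      have hAi : A ∩ B = A := Finset.inter_eq_left.2 hAB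
      have : pnorm μ q (fun x => projE μ A (projE μ B f) x - projE μ (A ∩ B) f x) = 0 := by
        refine pnorm_eq_zero μ hqne fun x _ => ?_
        rw [projE_tower hμ hAB, hAi, sub_self]
      rw [this]
      simp
  | succ n ih =>
      intro A B f hcard
      have hne : (A \ B).Nonempty := Finset.card_pos.1 (by omega)
      obtain ⟨j, hj⟩ := hne
      have hjA : j ∈ A := (Finset.mem_sdiff.1 hj).1
      have hjB : j ∉ B := (Finset.mem_sdiff.1 hj).2
      set A' : Finset (Fin d) := A.erase j with hA'
      have hjA' : j ∉ A' := Finset.notMem_erase j A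
      have hins : insert j A' = A := Finset.insert_erase hjA
      have hAB' : A ∩ B = A' ∩ B := by
        ext x
        simp only [hA', Finset.mem_inter, Finset.mem_erase]
        constructor
        · rintro ⟨h1, h2⟩; exact ⟨⟨fun hx => hjB (hx ▸ h2), h1⟩, h2⟩
        · rintro ⟨⟨_, h1⟩, h2⟩; exact ⟨h1, h2⟩
      have hA'B : (A' \ B).card = n := by
        have : A' \ B = (A \ B).erase j := by
          ext x
          simp only [hA', Finset.mem_sdiff, Finset.mem_erase]
          tauto
        rw [this, Finset.card_erase_of_mem hj, hcard]
        omega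
      set g : (Fin d → Ω) → ℝ := projE μ B f with hg
      have hgj : Junta B g := junta_projE B f
      have hcard1 : ((B \ A').card : ℝ) ≤ d := by
        have := Finset.card_le_univ (B \ A')
        simp only [Finset.card_univ, Fintype.card_fin] at this
        exact_mod_cast this
      have t1 : pnorm μ q (fun x => projE μ (insert j A') g x - projE μ A' g x)
          ≤ d * γ * pnorm μ q f := by
        refine le_trans (lemJ hμ hq hγ hprod (B \ A').card B A' g hgj j hjB hjA' rfl) ?_
        have hP : pnorm μ q g ≤ pnorm μ q f := pnorm_projE_le hμ hq1 B f
        have h0 : (0:ℝ) ≤ pnorm μ q g := pnorm_nonneg μ hμ q g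
        calc ((B \ A').card : ℝ) * γ * pnorm μ q g
            = ((B \ A').card : ℝ) * (γ * pnorm μ q g) := mul_assoc _ _ _
          _ ≤ d * (γ * pnorm μ q g) :=
              mul_le_mul_of_nonneg_right hcard1 (mul_nonneg hγ h0)
          _ ≤ d * (γ * pnorm μ q f) := by
              refine mul_le_mul_of_nonneg_left (mul_le_mul_of_nonneg_left hP hγ) ?_
              positivity
          _ = d * γ * pnorm μ q f := (mul_assoc _ _ _).symm
      have t2 : pnorm μ q (fun x => projE μ A' g x - projE μ (A' ∩ B) f x)
          ≤ n * d * γ * pnorm μ q f := ih A' B f hA'B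
      calc pnorm μ q (fun x => projE μ A (projE μ B f) x - projE μ (A ∩ B) f x)
          = pnorm μ q (fun x => (projE μ (insert j A') g x - projE μ A' g x)
              + (projE μ A' g x - projE μ (A' ∩ B) f x)) := by
            refine pnorm_congr μ q fun x _ => ?_
            rw [hins, hAB']
            ring
        _ ≤ pnorm μ q (fun x => projE μ (insert j A') g x - projE μ A' g x)
              + pnorm μ q (fun x => projE μ A' g x - projE μ (A' ∩ B) f x) :=
            pnorm_add_le μ hμ hq1 _ _
        _ ≤ d * γ * pnorm μ q f + n * d * γ * pnorm μ q f := add_le_add t1 t2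
        _ = (n + 1 : ℕ) * d * γ * pnorm μ q f := by push_cast; ring

theorem alt_cancel {β : Type*} [DecidableEq β] (S₀ : Finset β) (a : β) (ha : a ∉ S₀)
    (G : Finset β → ℝ) (hG : ∀ U, U ⊆ S₀ → G (insert a U) = G U) :
    ∑ U ∈ (insert a S₀).powerset,
      (-1 : ℝ) ^ ((insert a S₀).card - U.card) * G U = 0 := by
  rw [Finset.sum_powerset_insert ha]
  have hS : (insert a S₀).card = S₀.card + 1 := Finset.card_insert_of_notMem ha
  have key : ∀ U ∈ S₀.powerset,
      (-1 : ℝ) ^ ((insert a S₀).card - (insert a U).card) * G (insert a U)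
        = - ((-1 : ℝ) ^ ((insert a S₀).card - U.card) * G U) := by
    intro U hU
    have hU' : U ⊆ S₀ := Finset.mem_powerset.1 hU
    have haU : a ∉ U := fun h => ha (hU' h)
    have hcU : (insert a U).card = U.card + 1 := Finset.card_insert_of_notMem haU
    have hle : U.card ≤ S₀.card := Finset.card_le_card hU'
    rw [hG U hU', hS, hcU]
    have e1 : S₀.card + 1 - (U.card + 1) = S₀.card - U.card := by omega
    have e2 : S₀.card + 1 - U.card = (S₀.card - U.card) + 1 := by omega
    rw [e1, e2, pow_succ]
    ring
  rw [Finset.sum_congr rfl key, ← Finset.sum_add_distrib]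
  refine Finset.sum_eq_zero fun U hU => ?_
  ring

theorem inner_sum {β : Type*} [DecidableEq β] (T U : Finset β) (h : Finset β → ℝ) :
    ∑ T' ∈ T.powerset, (-1 : ℝ) ^ (T.card - T'.card) * h (T' ∩ U)
      = if T ⊆ U then ∑ T' ∈ T.powerset, (-1 : ℝ) ^ (T.card - T'.card) * h T' else 0 := by
  by_cases hTU : T ⊆ U
  · rw [if_pos hTU]
    refine Finset.sum_congr rfl fun T' hT' => ?_
    rw [Finset.inter_eq_left.2 ((Finset.mem_powerset.1 hT').trans hTU)]
  · rw [if_neg hTU]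
    obtain ⟨a, haT, haU⟩ := Finset.not_subset.1 hTU
    have hins : insert a (T.erase a) = T := Finset.insert_erase haT
    rw [← hins]
    exact alt_cancel (T.erase a) a (Finset.notMem_erase a T) (fun T' => h (T' ∩ U))
      (fun V _ => by
        show h (insert a V ∩ U) = h (V ∩ U)
        rw [Finset.insert_inter_of_notMem haU])

theorem outer_sum {β : Type*} [DecidableEq β] (S T : Finset β) (K : ℝ) :
    ∑ U ∈ S.powerset, (-1 : ℝ) ^ (S.card - U.card) * (if T ⊆ U then K else 0)
      = if S = T then K else 0 := by
  by_cases hTS : T ⊆ S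
  · by_cases hST : S = T
    · subst hST
      rw [if_pos rfl]
      rw [Finset.sum_eq_single S]
      · rw [Nat.sub_self, pow_zero, one_mul, if_pos Finset.Subset.rfl]
      · intro U hU hUS
        have hUsub : U ⊆ S := Finset.mem_powerset.1 hU
        rw [if_neg fun hSU => hUS (Finset.Subset.antisymm hUsub hSU), mul_zero]
      · intro hS
        exact absurd (Finset.mem_powerset.2 Finset.Subset.rfl) hS
    · rw [if_neg hST]
      have : ∃ a ∈ S, a ∉ T := by
        by_contra hcon
        push_neg at hcon
        exact hST (Finset.Subset.antisymm hcon hTS)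
      obtain ⟨a, haS, haT⟩ := this
      have hins : insert a (S.erase a) = S := Finset.insert_erase haS
      rw [← hins]
      refine alt_cancel (S.erase a) a (Finset.notMem_erase a S)
        (fun U => if T ⊆ U then K else 0) (fun V _ => ?_)
      have : (T ⊆ insert a V) ↔ (T ⊆ V) := by
        constructor
        · intro hsub x hx
          rcases Finset.mem_insert.1 (hsub hx) with h | h
          · exact absurd (h ▸ hx) haT
          · exact h
        · exact fun hsub => hsub.trans (Finset.subset_insert a V)
      show (if T ⊆ insert a V then K else 0) = (if T ⊆ V then K else 0)
      rw [if_congr this (Eq.refl K) (Eq.refl (0:ℝ))]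
  · rw [if_neg (show ¬ S = T from fun h => hTS (by rw [h]))]
    refine Finset.sum_eq_zero fun U hU => ?_
    rw [if_neg (fun hTU => hTS (hTU.trans (Finset.mem_powerset.1 hU))), mul_zero]

/-- The exact algebraic decomposition of `(f^{=S})^{=T}`. -/
theorem esComp_decomp (hμ : ∀ x, 0 ≤ μ x) (S T : Finset (Fin d)) (f : (Fin d → Ω) → ℝ)
    (x : Fin d → Ω) :
    esComp μ T (esComp μ S f) x
      = (if S = T then esComp μ T f x else 0)
        + ∑ T' ∈ T.powerset, (-1 : ℝ) ^ (T.card - T'.card) *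
            (∑ U ∈ S.powerset, (-1 : ℝ) ^ (S.card - U.card) *
              (projE μ T' (projE μ U f) x - projE μ (T' ∩ U) f x)) := by
  have expand : ∀ T' : Finset (Fin d), projE μ T' (esComp μ S f) x
      = ∑ U ∈ S.powerset, (-1 : ℝ) ^ (S.card - U.card) * projE μ T' (projE μ U f) x := by
    intro T'
    have : esComp μ S f = fun y => ∑ U ∈ S.powerset,
        (-1 : ℝ) ^ (S.card - U.card) * projE μ U f y := rfl
    rw [this, projE_sumF]
    exact Finset.sum_congr rfl fun U _ => projE_const_mul T' _ _ x
  have step1 : esComp μ T (esComp μ S f) x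
      = ∑ T' ∈ T.powerset, (-1 : ℝ) ^ (T.card - T'.card) *
          (∑ U ∈ S.powerset, (-1 : ℝ) ^ (S.card - U.card) * projE μ (T' ∩ U) f x)
        + ∑ T' ∈ T.powerset, (-1 : ℝ) ^ (T.card - T'.card) *
            (∑ U ∈ S.powerset, (-1 : ℝ) ^ (S.card - U.card) *
              (projE μ T' (projE μ U f) x - projE μ (T' ∩ U) f x)) := by
    rw [esComp, ← Finset.sum_add_distrib]
    refine Finset.sum_congr rfl fun T' _ => ?_
    rw [expand T', ← mul_add, ← Finset.sum_add_distrib]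
    congr 1
    refine Finset.sum_congr rfl fun U _ => ?_
    ring
  rw [step1]
  congr 1
  have inner : ∀ T' : Finset (Fin d),
      ∑ U ∈ S.powerset, (-1 : ℝ) ^ (S.card - U.card) * projE μ (T' ∩ U) f x
        = if S ⊆ T' then esComp μ S f x else 0 := by
    intro T'
    have := inner_sum S T' (fun V => projE μ V f x)
    calc ∑ U ∈ S.powerset, (-1 : ℝ) ^ (S.card - U.card) * projE μ (T' ∩ U) f x
        = ∑ U ∈ S.powerset, (-1 : ℝ) ^ (S.card - U.card) * projE μ (U ∩ T') f x := by
          refine Finset.sum_congr rfl fun U _ => by rw [Finset.inter_comm]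
      _ = if S ⊆ T' then ∑ U ∈ S.powerset, (-1 : ℝ) ^ (S.card - U.card) * projE μ U f x
            else 0 := this
      _ = if S ⊆ T' then esComp μ S f x else 0 := by rw [esComp]
  calc ∑ T' ∈ T.powerset, (-1 : ℝ) ^ (T.card - T'.card) *
        (∑ U ∈ S.powerset, (-1 : ℝ) ^ (S.card - U.card) * projE μ (T' ∩ U) f x)
      = ∑ T' ∈ T.powerset, (-1 : ℝ) ^ (T.card - T'.card) *
          (if S ⊆ T' then esComp μ S f x else 0) := by
        refine Finset.sum_congr rfl fun T' _ => by rw [inner T']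
    _ = if T = S then esComp μ S f x else 0 := outer_sum T S (esComp μ S f x)
    _ = if S = T then esComp μ T f x else 0 := by
        by_cases h : S = T
        · subst h; simp
        · rw [if_neg (fun hh => h hh.symm), if_neg h]

theorem abs_neg_one_pow (k : ℕ) : |(-1 : ℝ) ^ k| = 1 := by
  rw [abs_pow, abs_neg, abs_one, one_pow]

theorem gterm_bound (hμ : ∀ x, 0 ≤ μ x) {q γ : ℝ} (hq : 1 < q) (hγ : 0 ≤ γ)
    (hprod : IsQGammaProduct μ q γ) (f : (Fin d → Ω) → ℝ) (S T : Finset (Fin d)) :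
    pnorm μ q (fun x => ∑ T' ∈ T.powerset, (-1 : ℝ) ^ (T.card - T'.card) *
        (∑ U ∈ S.powerset, (-1 : ℝ) ^ (S.card - U.card) *
          (projE μ T' (projE μ U f) x - projE μ (T' ∩ U) f x)))
      ≤ (2:ℝ) ^ d * (2 ^ d * ((d:ℝ) * d * (γ * pnorm μ q f))) := by
  have hq1 : 1 ≤ q := le_of_lt hq
  set P : ℝ := pnorm μ q f with hP
  have hP0 : 0 ≤ P := pnorm_nonneg μ hμ q f
  set bnd : ℝ := (d:ℝ) * d * (γ * P) with hbnd
  have hbnd0 : 0 ≤ bnd := by positivity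
  have hcard2 : ∀ V : Finset (Fin d), ((2:ℝ)) ^ V.card ≤ 2 ^ d := by
    intro V
    have := Finset.card_le_univ V
    simp only [Finset.card_univ, Fintype.card_fin] at this
    exact pow_le_pow_right₀ (by norm_num) this
  have hDb : ∀ T' U : Finset (Fin d),
      pnorm μ q (fun x => projE μ T' (projE μ U f) x - projE μ (T' ∩ U) f x) ≤ bnd := by
    intro T' U
    refine le_trans (lemM hμ hq hγ hprod (T' \ U).card T' U f rfl) ?_
    have hc : ((T' \ U).card : ℝ) ≤ (d:ℝ) := by
      have := Finset.card_le_univ (T' \ U)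
      simp only [Finset.card_univ, Fintype.card_fin] at this
      exact_mod_cast this
    calc ((T' \ U).card : ℝ) * d * γ * P
        = ((T' \ U).card : ℝ) * (d * (γ * P)) := by ring
      _ ≤ (d:ℝ) * (d * (γ * P)) := by
          refine mul_le_mul_of_nonneg_right hc ?_
          positivity
      _ = bnd := by rw [hbnd]; ring
  have hinner : ∀ T' : Finset (Fin d),
      pnorm μ q (fun x => ∑ U ∈ S.powerset, (-1 : ℝ) ^ (S.card - U.card) *
          (projE μ T' (projE μ U f) x - projE μ (T' ∩ U) f x))
        ≤ 2 ^ d * bnd := by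
    intro T'
    refine le_trans (pnorm_sum_le μ hμ hq1 S.powerset _) ?_
    have each : ∀ U ∈ S.powerset,
        pnorm μ q (fun x => (-1 : ℝ) ^ (S.card - U.card) *
            (projE μ T' (projE μ U f) x - projE μ (T' ∩ U) f x)) ≤ bnd := by
      intro U _
      rw [pnorm_const_mul μ hμ (lt_trans zero_lt_one hq) _ _, abs_neg_one_pow, one_mul]
      exact hDb T' U
    calc ∑ U ∈ S.powerset, pnorm μ q (fun x => (-1 : ℝ) ^ (S.card - U.card) *
            (projE μ T' (projE μ U f) x - projE μ (T' ∩ U) f x))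
        ≤ ∑ _U ∈ S.powerset, bnd := Finset.sum_le_sum each
      _ = (S.powerset.card : ℝ) * bnd := by rw [Finset.sum_const, nsmul_eq_mul]
      _ ≤ 2 ^ d * bnd := by
          refine mul_le_mul_of_nonneg_right ?_ hbnd0
          rw [Finset.card_powerset]
          calc ((2 ^ S.card : ℕ) : ℝ) = (2:ℝ) ^ S.card := by push_cast; ring
            _ ≤ 2 ^ d := hcard2 S
  refine le_trans (pnorm_sum_le μ hμ hq1 T.powerset _) ?_
  have each : ∀ T' ∈ T.powerset,
      pnorm μ q (fun x => (-1 : ℝ) ^ (T.card - T'.card) *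
          (∑ U ∈ S.powerset, (-1 : ℝ) ^ (S.card - U.card) *
            (projE μ T' (projE μ U f) x - projE μ (T' ∩ U) f x))) ≤ 2 ^ d * bnd := by
    intro T' _
    rw [pnorm_const_mul μ hμ (lt_trans zero_lt_one hq) _ _, abs_neg_one_pow, one_mul]
    exact hinner T'
  calc ∑ T' ∈ T.powerset, pnorm μ q (fun x => (-1 : ℝ) ^ (T.card - T'.card) *
          (∑ U ∈ S.powerset, (-1 : ℝ) ^ (S.card - U.card) *
            (projE μ T' (projE μ U f) x - projE μ (T' ∩ U) f x)))
      ≤ ∑ _T' ∈ T.powerset, ((2:ℝ) ^ d * bnd) := Finset.sum_le_sum each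
    _ = (T.powerset.card : ℝ) * (2 ^ d * bnd) := by rw [Finset.sum_const, nsmul_eq_mul]
    _ ≤ (2:ℝ) ^ d * (2 ^ d * bnd) := by
        refine mul_le_mul_of_nonneg_right ?_ (by positivity)
        rw [Finset.card_powerset]
        calc ((2 ^ T.card : ℕ) : ℝ) = (2:ℝ) ^ T.card := by push_cast; ring
          _ ≤ 2 ^ d := hcard2 T

theorem coeff_le (d : ℕ) : (2:ℝ) ^ d * 2 ^ d * ((d:ℝ) * d) ≤ 2 ^ ((10:ℝ) * d) := by
  have h1 : (10:ℝ) * (d:ℝ) = ((10 * d : ℕ) : ℝ) := by push_cast; ring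
  rw [h1, Real.rpow_natCast]
  have hnat : 2 ^ d * 2 ^ d * (d * d) ≤ 2 ^ (10 * d) := by
    have hd : d ≤ 2 ^ d := le_of_lt (Nat.lt_two_pow_self)
    calc 2 ^ d * 2 ^ d * (d * d) ≤ 2 ^ d * 2 ^ d * (2 ^ d * 2 ^ d) :=
          Nat.mul_le_mul_left _ (Nat.mul_le_mul hd hd)
      _ = 2 ^ (d + d + (d + d)) := by ring
      _ ≤ 2 ^ (10 * d) := Nat.pow_le_pow_right (by norm_num) (by omega)
  exact_mod_cast hnat

end ESaux

open ESaux in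
/-- approximate closure of the Efron–Stein basis. There is a
universal constant `C` such that on any `(q,γ)`-product:
for `S ≠ T`, `‖(f^{=S})^{=T}‖_q ≤ 2^{C·d} γ ‖f‖_q`, while
`‖(f^{=S})^{=S} − f^{=S}‖_q ≤ 2^{C·d} γ ‖f‖_q`. -/
theorem es_basis_approximately_closed :
    ∃ C : ℝ, 0 < C ∧
      ∀ (d : ℕ) (Ω : Type) [Fintype Ω] [DecidableEq Ω]
        (μ : (Fin d → Ω) → ℝ), (∀ x, 0 ≤ μ x) → (∑ x, μ x = 1) →
        ∀ q γ : ℝ, 1 < q → 0 ≤ γ → IsQGammaProduct μ q γ →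
        ∀ (f : (Fin d → Ω) → ℝ) (S T : Finset (Fin d)),
          (S ≠ T →
            pnorm μ q (esComp μ T (esComp μ S f)) ≤ 2 ^ (C * d) * γ * pnorm μ q f)
          ∧ pnorm μ q (fun x => esComp μ S (esComp μ S f) x - esComp μ S f x)
              ≤ 2 ^ (C * d) * γ * pnorm μ q f := by
  refine ⟨10, by norm_num, ?_⟩
  intro d Ω _ _ μ hμ0 hμ1 q γ hq hγ hprod f S T
  have hP0 : 0 ≤ pnorm μ q f := pnorm_nonneg μ hμ0 q f
  set P : ℝ := pnorm μ q f with hPdef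
  have key : ∀ T₀ : Finset (Fin d), pnorm μ q (fun x =>
      ∑ T' ∈ T₀.powerset, (-1 : ℝ) ^ (T₀.card - T'.card) *
        (∑ U ∈ S.powerset, (-1 : ℝ) ^ (S.card - U.card) *
          (projE μ T' (projE μ U f) x - projE μ (T' ∩ U) f x)))
      ≤ 2 ^ ((10:ℝ) * d) * γ * P := by
    intro T₀
    refine le_trans (gterm_bound hμ0 hq hγ hprod f S T₀) ?_
    calc (2:ℝ) ^ d * (2 ^ d * ((d:ℝ) * d * (γ * P)))
        = ((2:ℝ) ^ d * 2 ^ d * ((d:ℝ) * d)) * (γ * P) := by ring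
      _ ≤ 2 ^ ((10:ℝ) * d) * (γ * P) := by
          refine mul_le_mul_of_nonneg_right (coeff_le d) ?_
          positivity
      _ = 2 ^ ((10:ℝ) * d) * γ * P := by ring
  constructor
  · intro hST
    have : pnorm μ q (esComp μ T (esComp μ S f)) = pnorm μ q (fun x =>
        ∑ T' ∈ T.powerset, (-1 : ℝ) ^ (T.card - T'.card) *
          (∑ U ∈ S.powerset, (-1 : ℝ) ^ (S.card - U.card) *
            (projE μ T' (projE μ U f) x - projE μ (T' ∩ U) f x))) := by
      refine pnorm_congr μ q fun x _ => ?_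
      rw [esComp_decomp hμ0 S T f x, if_neg hST, zero_add]
    rw [this]
    exact key T
  · have : pnorm μ q (fun x => esComp μ S (esComp μ S f) x - esComp μ S f x)
        = pnorm μ q (fun x =>
        ∑ T' ∈ S.powerset, (-1 : ℝ) ^ (S.card - T'.card) *
          (∑ U ∈ S.powerset, (-1 : ℝ) ^ (S.card - U.card) *
            (projE μ T' (projE μ U f) x - projE μ (T' ∩ U) f x))) := by
      refine pnorm_congr μ q fun x _ => ?_
      rw [esComp_decomp hμ0 S S f x, if_pos rfl]
      ring
    rw [this]
    exact key S
end
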